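/- arXiv:1311.5321 — 2 statements merged into one kernel-verified Lean document; each statement's English description precedes it below -/
import Mathlib

section
/- Fix integers n > r ≥ 0. (i) If u₁, u₂ ∈ U_r, p₁, p₂ ∈ P'_{n−r}, q₁, q₂ ∈ Q'_{n−r}, and ū₁, ū₂ ∈ Ū_{r,n−r} satisfy R_r u₁ p₁ q₁ ū₁ = R_r u₂ p₂ q₂ ū₂ (equality of right cosets in GL_n(ℝ)), then u₁ = u₂, q₁ = q₂, ū₁ = ū₂, and p₂ p₁^{-1} ∈ N'_{n−r}. (ii) The complement in GL_n(ℝ) of the product set R_r · U_r · P'_{n−r} · Q'_{n−r} · Ū_{r,n−r} is a null set for Haar measure on GL_n(ℝ). -/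
open Matrix MeasureTheory

/-- Borel σ-algebra on `GL_n(ℝ)` (with its topology as a matrix group). -/
noncomputable instance (n : ℕ) : MeasurableSpace (GL (Fin n) ℝ) := borel _

/-- The Rankin–Selberg subgroup `R_r ⊆ GL_n(ℝ)`: block matrices `[g, u; 0, h]` with
`g ∈ GL_r(ℝ)`, `h ∈ N_{n-r}(ℝ)` upper-triangular unipotent, and `u` an `r × (n-r)` matrix
whose first column (the column of index `r`) is zero. -/
def RSgroup (n r : ℕ) : Set (GL (Fin n) ℝ) :=
  {g | (∀ i j : Fin n, r ≤ (i : ℕ) → (j : ℕ) < (i : ℕ) →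
          (g : Matrix (Fin n) (Fin n) ℝ) i j = 0) ∧
       (∀ i : Fin n, r ≤ (i : ℕ) → (g : Matrix (Fin n) (Fin n) ℝ) i i = 1) ∧
       (∀ i j : Fin n, (i : ℕ) < r → (j : ℕ) = r → (g : Matrix (Fin n) (Fin n) ℝ) i j = 0)}

/-- The subgroup `U_r ⊆ GL_n(ℝ)` of block matrices `[1_r, u; 0, 1_{n-r}]` where all columns
of `u` except possibly the first one (the column of index `r`) vanish. -/
def Ugroup (n r : ℕ) : Set (GL (Fin n) ℝ) :=
  {g | (∀ i : Fin n, (g : Matrix (Fin n) (Fin n) ℝ) i i = 1) ∧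
       (∀ i j : Fin n, i ≠ j → ¬((i : ℕ) < r ∧ (j : ℕ) = r) →
          (g : Matrix (Fin n) (Fin n) ℝ) i j = 0)}

/-- The image `P'_{n-r}` of `P_{n-r} = [1, *; 0, *] ⊆ GL_{n-r}(ℝ)` in `GL_n(ℝ)` under the
embedding `g ↦ diag(1_r, g)`. -/
def Pgroup' (n r : ℕ) : Set (GL (Fin n) ℝ) :=
  {g | (∀ i j : Fin n, ((i : ℕ) < r ∨ (j : ℕ) < r) →
          (g : Matrix (Fin n) (Fin n) ℝ) i j = if i = j then 1 else 0) ∧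
       (∀ i j : Fin n, (j : ℕ) = r →
          (g : Matrix (Fin n) (Fin n) ℝ) i j = if (i : ℕ) = r then 1 else 0)}

/-- The image `Q'_{n-r}` of `Q_{n-r} = [*, 0; *, 1_{n-r-1}] ⊆ GL_{n-r}(ℝ)` in `GL_n(ℝ)`
under the embedding `g ↦ diag(1_r, g)`. -/
def Qgroup' (n r : ℕ) : Set (GL (Fin n) ℝ) :=
  {g | (∀ i j : Fin n, ((i : ℕ) < r ∨ (j : ℕ) < r) →
          (g : Matrix (Fin n) (Fin n) ℝ) i j = if i = j then 1 else 0) ∧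
       (∀ i j : Fin n, r + 1 ≤ (j : ℕ) →
          (g : Matrix (Fin n) (Fin n) ℝ) i j = if i = j then 1 else 0)}

/-- The image `N'_{n-r}` of `N_{n-r}(ℝ)` in `GL_n(ℝ)` under `g ↦ diag(1_r, g)`. -/
def Ngroup' (n r : ℕ) : Set (GL (Fin n) ℝ) :=
  {g | (∀ i : Fin n, (g : Matrix (Fin n) (Fin n) ℝ) i i = 1) ∧
       (∀ i j : Fin n, i ≠ j → ¬(r ≤ (i : ℕ) ∧ (i : ℕ) < (j : ℕ)) →
          (g : Matrix (Fin n) (Fin n) ℝ) i j = 0)}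

/-- `Ū_{r,n-r} ⊆ GL_n(ℝ)`: block lower-triangular matrices `[1_r, 0; x, 1_{n-r}]`. -/
def Ubar (n r : ℕ) : Set (GL (Fin n) ℝ) :=
  {g | (∀ i : Fin n, (g : Matrix (Fin n) (Fin n) ℝ) i i = 1) ∧
       (∀ i j : Fin n, i ≠ j → ¬(r ≤ (i : ℕ) ∧ (j : ℕ) < r) →
          (g : Matrix (Fin n) (Fin n) ℝ) i j = 0)}

namespace RSproof

abbrev Mn (n : ℕ) := Matrix (Fin n) (Fin n) ℝ

variable {n r : ℕ}

/-- the projection onto coordinates `≥ r`. -/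
def Pj (n r : ℕ) : Mn n := Matrix.diagonal (fun i => if r ≤ (i : ℕ) then 1 else 0)

lemma Pj_apply (i j : Fin n) : Pj n r i j = if i = j ∧ r ≤ (i : ℕ) then 1 else 0 := by
  rcases eq_or_ne i j with rfl | hne
  · simp [Pj, Matrix.diagonal_apply_eq]
  · simp [Pj, Matrix.diagonal_apply_ne _ hne, hne]

lemma mul_Pj (A : Mn n) (i j : Fin n) :
    (A * Pj n r) i j = if r ≤ (j : ℕ) then A i j else 0 := by
  rw [Pj, Matrix.mul_diagonal]; by_cases h : r ≤ (j : ℕ) <;> simp [h]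

lemma Pj_mul (A : Mn n) (i j : Fin n) :
    (Pj n r * A) i j = if r ≤ (i : ℕ) then A i j else 0 := by
  rw [Pj, Matrix.diagonal_mul]; by_cases h : r ≤ (i : ℕ) <;> simp [h]

lemma Pj_mul_Pj : (Pj n r) * (Pj n r) = Pj n r := by
  ext i j
  rw [mul_Pj, Pj]
  rcases eq_or_ne i j with rfl | hne
  · by_cases h : r ≤ (i : ℕ) <;> simp [Matrix.diagonal_apply_eq, h]
  · by_cases h : r ≤ (j : ℕ) <;> simp [Matrix.diagonal_apply_ne _ hne]

/-- support contained in the `U`-block : rows `< r`, column `r`. -/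
def SuppX (r : ℕ) (A : Mn n) : Prop := ∀ i j : Fin n, A i j ≠ 0 → ((i : ℕ) < r ∧ (j : ℕ) = r)

/-- support contained in the `Ubar`-block : rows `≥ r`, columns `< r`. -/
def SuppY (r : ℕ) (A : Mn n) : Prop := ∀ i j : Fin n, A i j ≠ 0 → (r ≤ (i : ℕ) ∧ (j : ℕ) < r)

lemma SuppX.pj_mul {A : Mn n} (hA : SuppX r A) : Pj n r * A = 0 := by
  ext i j
  rw [Pj_mul]
  by_cases h : r ≤ (i : ℕ)
  · by_cases h0 : A i j = 0
    · simp [h, h0]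
    · exact absurd h (by simpa using not_le.2 (hA i j h0).1)
  · simp [h]

lemma SuppX.mul_pj {A : Mn n} (hA : SuppX r A) : A * Pj n r = A := by
  ext i j
  rw [mul_Pj]
  by_cases h0 : A i j = 0
  · by_cases h : r ≤ (j : ℕ) <;> simp [h, h0]
  · simp [le_of_eq (hA i j h0).2.symm, h0]

lemma SuppY.pj_mul {A : Mn n} (hA : SuppY r A) : Pj n r * A = A := by
  ext i j
  rw [Pj_mul]
  by_cases h0 : A i j = 0
  · by_cases h : r ≤ (i : ℕ) <;> simp [h, h0]
  · simp [(hA i j h0).1, h0]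

lemma SuppY.mul_pj {A : Mn n} (hA : SuppY r A) : A * Pj n r = 0 := by
  ext i j
  rw [mul_Pj]
  by_cases h : r ≤ (j : ℕ)
  · by_cases h0 : A i j = 0
    · simp [h, h0]
    · exact absurd h (by simpa using not_le.2 (hA i j h0).2)
  · simp [h]

lemma SuppX.mul_eq_zero {A B : Mn n} (hA : SuppX r A) (hB : SuppX r B) : A * B = 0 := by
  ext i j
  rw [Matrix.mul_apply]
  refine Finset.sum_eq_zero fun k _ => ?_
  by_cases h0 : A i k = 0
  · simp [h0]
  · have hk := (hA i k h0).2
    have hB0 : B k j = 0 := by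
      by_contra hB0
      exact absurd ((hB k j hB0).1) (by omega)
    simp [hB0]

lemma SuppY.mul_eq_zero {A B : Mn n} (hA : SuppY r A) (hB : SuppY r B) : A * B = 0 := by
  ext i j
  rw [Matrix.mul_apply]
  refine Finset.sum_eq_zero fun k _ => ?_
  by_cases h0 : A i k = 0
  · simp [h0]
  · have hk := (hA i k h0).2
    have hB0 : B k j = 0 := by
      by_contra hB0
      exact absurd ((hB k j hB0).1) (by omega)
    simp [hB0]

/-- diag(1_r, *) shape. -/
def Dpred (r : ℕ) (A : Mn n) : Prop :=
  ∀ i j : Fin n, ((i : ℕ) < r ∨ (j : ℕ) < r) → A i j = if i = j then 1 else 0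

lemma Dpred.mul {A B : Mn n} (hA : Dpred r A) (hB : Dpred r B) : Dpred r (A * B) := by
  intro i j hij
  rw [Matrix.mul_apply]
  rcases hij with hi | hj
  · have : ∀ k, A i k = if i = k then 1 else 0 := fun k => hA i k (Or.inl hi)
    calc (∑ k, A i k * B k j) = ∑ k, (if k = i then B k j else 0) := by
          refine Finset.sum_congr rfl fun k _ => ?_
          rw [this k]
          by_cases h : i = k
          · subst h; simp
          · simp [h, Ne.symm h]
      _ = B i j := by rw [Fintype.sum_ite_eq' i (fun k => B k j)]
      _ = if i = j then 1 else 0 := hB i j (Or.inl hi)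
  · have : ∀ k, B k j = if k = j then 1 else 0 := fun k => hB k j (Or.inr hj)
    calc (∑ k, A i k * B k j) = ∑ k, (if k = j then A i k else 0) := by
          refine Finset.sum_congr rfl fun k _ => ?_
          rw [this k]
          by_cases h : k = j <;> simp [h]
      _ = A i j := by rw [Fintype.sum_ite_eq' j (fun k => A i k)]
      _ = if i = j then 1 else 0 := hA i j (Or.inr hj)

lemma Dpred.pj_comm {A : Mn n} (hA : Dpred r A) : Pj n r * A = A * Pj n r := by
  ext i j
  rw [Pj_mul, mul_Pj]
  by_cases hi : r ≤ (i : ℕ) <;> by_cases hj : r ≤ (j : ℕ)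
  · simp [hi, hj]
  · have := hA i j (Or.inr (by omega))
    have hne : i ≠ j := fun h => by subst h; omega
    simp [hi, hj, this, hne]
  · have := hA i j (Or.inl (by omega))
    have hne : i ≠ j := fun h => by subst h; omega
    simp [hi, hj, this, hne]
  · simp [hi, hj]

lemma Dpred.mul_one_sub_pj {A : Mn n} (hA : Dpred r A) : A * (1 - Pj n r) = 1 - Pj n r := by
  ext i j
  rw [Matrix.mul_sub, Matrix.mul_one, Matrix.sub_apply, Matrix.sub_apply, mul_Pj]
  by_cases hj : r ≤ (j : ℕ)
  · rcases eq_or_ne i j with rfl | hne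
    · simp [hj, Matrix.one_apply_eq, Pj_apply]
    · simp [hj, Matrix.one_apply_ne hne, Pj_apply, hne]
  · have hAij := hA i j (Or.inr (by omega))
    rcases eq_or_ne i j with rfl | hne
    · simp [hj, hAij, Pj_apply]
    · simp [hj, hAij, Pj_apply, hne, Matrix.one_apply_ne hne]

/-- `A` has `j₀`-th column equal to the `j₀`-th standard basis vector. -/
def FixC (A : Mn n) (j₀ : Fin n) : Prop := ∀ i, A i j₀ = if i = j₀ then 1 else 0

/-- `A` has `i₀`-th row equal to the standard basis vector. -/
def FixR (A : Mn n) (i₀ : Fin n) : Prop := ∀ j, A i₀ j = if i₀ = j then 1 else 0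

lemma FixC.mul {A B : Mn n} {j₀ : Fin n} (hA : FixC A j₀) (hB : FixC B j₀) :
    FixC (A * B) j₀ := by
  intro i
  rw [Matrix.mul_apply]
  calc (∑ k, A i k * B k j₀) = ∑ k, (if k = j₀ then A i k else 0) := by
        refine Finset.sum_congr rfl fun k _ => ?_
        rw [hB k]; by_cases h : k = j₀ <;> simp [h]
    _ = A i j₀ := Fintype.sum_ite_eq' j₀ (fun k => A i k)
    _ = _ := hA i

lemma FixC.inv {A B : Mn n} {j₀ : Fin n} (hBA : B * A = 1) (hA : FixC A j₀) : FixC B j₀ := by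
  intro i
  have h1 : (B * A) i j₀ = if i = j₀ then 1 else 0 := by rw [hBA, Matrix.one_apply]
  rw [Matrix.mul_apply] at h1
  calc B i j₀ = ∑ k, (if k = j₀ then B i k else 0) := (Fintype.sum_ite_eq' j₀ fun k => B i k).symm
    _ = ∑ k, B i k * A k j₀ := by
        refine Finset.sum_congr rfl fun k _ => ?_
        rw [hA k]; by_cases h : k = j₀ <;> simp [h]
    _ = _ := h1

lemma FixR.mul {A B : Mn n} {i₀ : Fin n} (hA : FixR A i₀) (hB : FixR B i₀) :
    FixR (A * B) i₀ := by
  intro j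
  rw [Matrix.mul_apply]
  calc (∑ k, A i₀ k * B k j) = ∑ k, (if k = i₀ then B k j else 0) := by
        refine Finset.sum_congr rfl fun k _ => ?_
        rw [hA k]
        by_cases h : i₀ = k
        · subst h; simp
        · simp [h, Ne.symm h]
    _ = B i₀ j := Fintype.sum_ite_eq' i₀ (fun k => B k j)
    _ = _ := hB j

lemma FixR.inv {A B : Mn n} {i₀ : Fin n} (hAB : A * B = 1) (hA : FixR A i₀) : FixR B i₀ := by
  intro j
  have h1 : (A * B) i₀ j = if i₀ = j then 1 else 0 := by rw [hAB, Matrix.one_apply]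
  rw [Matrix.mul_apply] at h1
  calc B i₀ j = ∑ k, (if k = i₀ then B k j else 0) := (Fintype.sum_ite_eq' i₀ fun k => B k j).symm
    _ = ∑ k, A i₀ k * B k j := by
        refine Finset.sum_congr rfl fun k _ => ?_
        rw [hA k]
        by_cases h : i₀ = k
        · subst h; simp
        · simp [h, Ne.symm h]
    _ = _ := h1

/-- matrix-level condition of `Ngroup'`. -/
def Npred (r : ℕ) (A : Mn n) : Prop :=
  (∀ i : Fin n, A i i = 1) ∧
  (∀ i j : Fin n, i ≠ j → ¬(r ≤ (i : ℕ) ∧ (i : ℕ) < (j : ℕ)) → A i j = 0)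

lemma Npred.lowtri {A : Mn n} (hA : Npred r A) {i j : Fin n} (h : (j : ℕ) < (i : ℕ)) :
    A i j = 0 :=
  hA.2 i j (fun hc => by subst hc; omega) (by omega)

lemma Npred.fixC {A : Mn n} (hA : Npred r A) {j₀ : Fin n} (hj : (j₀ : ℕ) ≤ r) : FixC A j₀ := by
  intro i
  rcases eq_or_ne i j₀ with rfl | hne
  · simp [hA.1 i]
  · have : A i j₀ = 0 := by
      refine hA.2 i j₀ hne ?_
      rintro ⟨h1, h2⟩; omega
    simp [this, hne]

lemma Npred.fixR {A : Mn n} (hA : Npred r A) {i₀ : Fin n} (hi : (i₀ : ℕ) < r) : FixR A i₀ := by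
  intro j
  rcases eq_or_ne i₀ j with rfl | hne
  · simp [hA.1 i₀]
  · have : A i₀ j = 0 := by
      refine hA.2 i₀ j hne ?_
      rintro ⟨h1, h2⟩; omega
    simp [this, hne]

/-- the inverse of a unipotent upper-triangular (embedded) matrix is again one. -/
lemma Npred.inv {A B : Mn n} (hA : Npred r A) (hAB : A * B = 1) (hBA : B * A = 1) :
    Npred r B := by
  -- lower-triangularity of B, by downward induction on the row
  have tri : ∀ d : ℕ, ∀ i j : Fin n, n ≤ (i : ℕ) + d + 1 → (j : ℕ) < (i : ℕ) → B i j = 0 := by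
    intro d
    induction d with
    | zero =>
      intro i j hi hij
      have h1 : (A * B) i j = 0 := by
        rw [hAB, Matrix.one_apply]
        have : i ≠ j := fun h => by subst h; omega
        simp [this]
      rw [Matrix.mul_apply] at h1
      calc B i j = ∑ k, (if k = i then B k j else 0) := (Fintype.sum_ite_eq' i fun k => B k j).symm
        _ = ∑ k, A i k * B k j := by
            refine Finset.sum_congr rfl fun k _ => ?_
            rcases eq_or_ne k i with rfl | hk
            · simp [hA.1 k]
            · have hk' : (k : ℕ) < (i : ℕ) ∨ (i : ℕ) < (k : ℕ) := by
                rcases lt_or_gt_of_ne (fun h : (k:ℕ) = (i:ℕ) => hk (Fin.ext h)) with h | h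
                · exact Or.inl h
                · exact Or.inr h
              rcases hk' with h | h
              · rw [hA.lowtri h]; simp [hk]
              · omega
        _ = 0 := h1
    | succ d ih =>
      intro i j hi hij
      have h1 : (A * B) i j = 0 := by
        rw [hAB, Matrix.one_apply]
        have : i ≠ j := fun h => by subst h; omega
        simp [this]
      rw [Matrix.mul_apply] at h1
      calc B i j = ∑ k, (if k = i then B k j else 0) := (Fintype.sum_ite_eq' i fun k => B k j).symm
        _ = ∑ k, A i k * B k j := by
            refine Finset.sum_congr rfl fun k _ => ?_
            rcases eq_or_ne k i with rfl | hk
            · simp [hA.1 k]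
            · rcases lt_or_gt_of_ne (fun h : (k:ℕ) = (i:ℕ) => hk (Fin.ext h)) with h | h
              · rw [hA.lowtri h]; simp [hk]
              · have hBk : B k j = 0 := ih k j (by omega) (by omega)
                rw [hBk]; simp [hk]
        _ = 0 := h1
  have tri' : ∀ i j : Fin n, (j : ℕ) < (i : ℕ) → B i j = 0 := fun i j h =>
    tri n i j (by omega) h
  -- rows below r are standard
  have rows : ∀ i₀ : Fin n, (i₀ : ℕ) < r → FixR B i₀ := fun i₀ h =>
    FixR.inv hAB (hA.fixR h)
  -- diagonal
  have diag : ∀ i : Fin n, B i i = 1 := by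
    intro i
    have h1 : (A * B) i i = 1 := by rw [hAB, Matrix.one_apply_eq]
    rw [Matrix.mul_apply] at h1
    have h2 : ∀ k, A i k * B k i = if k = i then B i i else 0 := by
      intro k
      rcases eq_or_ne k i with rfl | hk
      · simp [hA.1 k]
      · rcases lt_or_gt_of_ne (fun h : (k:ℕ) = (i:ℕ) => hk (Fin.ext h)) with h | h
        · rw [hA.lowtri h]; simp [hk]
        · rw [tri' k i h]; simp [hk]
    rw [Finset.sum_congr rfl (fun k _ => h2 k), Fintype.sum_ite_eq' i (fun _ => B i i)] at h1
    exact h1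
  refine ⟨diag, ?_⟩
  intro i j hne hcond
  by_cases hi : (i : ℕ) < r
  · have := rows i hi j
    simpa [hne] using this
  · have hij : (j : ℕ) < (i : ℕ) := by
      have h1 : ¬ ((i : ℕ) < (j : ℕ)) := fun h => hcond ⟨by omega, h⟩
      have h2 : (i : ℕ) ≠ (j : ℕ) := fun h => hne (Fin.ext h)
      omega
    exact tri' i j hij



lemma val_inv_eq {w : GL (Fin n) ℝ} {B : Mn n} (h : (↑w : Mn n) * B = 1) :
    ((↑(w⁻¹) : Mn n)) = B := by
  calc (↑(w⁻¹) : Mn n) = ↑(w⁻¹) * ((↑w : Mn n) * B) := by rw [h, mul_one]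
    _ = ((↑(w⁻¹) : Mn n) * (↑w : Mn n)) * B := by rw [mul_assoc]
    _ = B := by rw [← Units.val_mul, inv_mul_cancel, Units.val_one, one_mul]

lemma unit_cancel_left (w : GL (Fin n) ℝ) {A B : Mn n}
    (h : (↑w : Mn n) * A = (↑w : Mn n) * B) : A = B := by
  calc A = ((↑(w⁻¹) : Mn n) * ↑w) * A := by
        rw [← Units.val_mul, inv_mul_cancel, Units.val_one, one_mul]
    _ = (↑(w⁻¹) : Mn n) * ((↑w : Mn n) * B) := by rw [mul_assoc, h]
    _ = ((↑(w⁻¹) : Mn n) * ↑w) * B := by rw [mul_assoc]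
    _ = B := by rw [← Units.val_mul, inv_mul_cancel, Units.val_one, one_mul]

lemma mem_U_supp {u : GL (Fin n) ℝ} (hu : u ∈ Ugroup n r) :
    SuppX r ((↑u : Mn n) - 1) := by
  intro i j h0
  rw [Matrix.sub_apply] at h0
  by_contra hc
  rcases eq_or_ne i j with rfl | hne
  · exact h0 (by rw [hu.1 i, Matrix.one_apply_eq, sub_self])
  · exact h0 (by rw [hu.2 i j hne hc, Matrix.one_apply_ne hne, sub_zero])

lemma mem_Ubar_supp {v : GL (Fin n) ℝ} (hv : v ∈ Ubar n r) :
    SuppY r ((↑v : Mn n) - 1) := by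
  intro i j h0
  rw [Matrix.sub_apply] at h0
  by_contra hc
  rcases eq_or_ne i j with rfl | hne
  · exact h0 (by rw [hv.1 i, Matrix.one_apply_eq, sub_self])
  · exact h0 (by rw [hv.2 i j hne hc, Matrix.one_apply_ne hne, sub_zero])

lemma unip_inv {X : Mn n} (hX2 : X * X = 0) {w : GL (Fin n) ℝ}
    (hw : (↑w : Mn n) = 1 + X) : (↑(w⁻¹) : Mn n) = 1 - X := by
  refine val_inv_eq ?_
  rw [hw]
  have : ((1 : Mn n) + X) * (1 - X) = 1 - X * X := by noncomm_ring
  rw [this, hX2, sub_zero]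

lemma mem_Q_fixC {q : GL (Fin n) ℝ} (hq : q ∈ Qgroup' n r) {j : Fin n}
    (hj : (j : ℕ) ≠ r) : FixC (↑q : Mn n) j := by
  intro i
  rcases lt_or_ge (j : ℕ) r with h | h
  · exact hq.1 i j (Or.inr h)
  · exact hq.2 i j (by omega)

lemma mem_P_fixC (hn : r < n) {p : GL (Fin n) ℝ} (hp : p ∈ Pgroup' n r) :
    FixC (↑p : Mn n) ⟨r, hn⟩ := by
  intro i
  rw [hp.2 i ⟨r, hn⟩ rfl]
  by_cases h : (i : ℕ) = r
  · simp [h, Fin.ext_iff]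
  · simp [h, Fin.ext_iff]

lemma FixC.mul_apply {B : Mn n} {j₀ : Fin n} (hB : FixC B j₀) (A : Mn n) (i : Fin n) :
    (A * B) i j₀ = A i j₀ := by
  rw [Matrix.mul_apply]
  calc (∑ k, A i k * B k j₀) = ∑ k, (if k = j₀ then A i k else 0) := by
        refine Finset.sum_congr rfl fun k _ => ?_
        rw [hB k]; by_cases h : k = j₀ <;> simp [h]
    _ = A i j₀ := Fintype.sum_ite_eq' j₀ (fun k => A i k)

lemma RS_pj {w : GL (Fin n) ℝ} (hw : w ∈ RSgroup n r) :
    Pj n r * (↑w : Mn n) = Pj n r * (↑w : Mn n) * Pj n r := by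
  ext i j
  rw [mul_Pj, Pj_mul]
  by_cases hi : r ≤ (i : ℕ)
  · by_cases hj : r ≤ (j : ℕ)
    · simp [hi, hj]
    · have : (↑w : Mn n) i j = 0 := hw.1 i j hi (by omega)
      simp [hi, hj, this]
  · simp [hi]

lemma Npred_n' {w : GL (Fin n) ℝ} (hw : w ∈ RSgroup n r) :
    Npred r (1 - Pj n r + Pj n r * (↑w : Mn n) * Pj n r) := by
  constructor
  · intro i
    rw [Matrix.add_apply, Matrix.sub_apply, mul_Pj, Pj_mul, Matrix.one_apply_eq, Pj_apply]
    by_cases hi : r ≤ (i : ℕ)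
    · simp [hi, hw.2.1 i hi]
    · simp [hi]
  · intro i j hne hcond
    rw [Matrix.add_apply, Matrix.sub_apply, mul_Pj, Pj_mul, Matrix.one_apply_ne hne, Pj_apply]
    by_cases hi : r ≤ (i : ℕ)
    · have hji : (j : ℕ) < (i : ℕ) := by
        have h1 : ¬((i : ℕ) < (j : ℕ)) := fun h => hcond ⟨hi, h⟩
        have h2 : (i : ℕ) ≠ (j : ℕ) := fun h => hne (Fin.ext h)
        omega
      by_cases hj : r ≤ (j : ℕ)
      · simp [hi, hj, hne, hw.1 i j hi hji]
      · simp [hi, hj, hne]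
    · simp [hi, hne]

lemma key_step {R K1 K2 V1 V2 X₁ X₂ Y₁ Y₂ U1 U2 : Mn n}
    (hU1 : U1 = 1 + X₁) (hU2 : U2 = 1 + X₂) (hV1 : V1 = 1 + Y₁) (hV2 : V2 = 1 + Y₂)
    (hX₁ : SuppX r X₁) (hX₂ : SuppX r X₂) (hY₁ : SuppY r Y₁) (hY₂ : SuppY r Y₂)
    (hK1 : Dpred r K1) (hK2 : Dpred r K2)
    (hRproj : Pj n r * R = Pj n r * R * Pj n r)
    (heq : U1 * K1 * V1 = R * (U2 * K2 * V2)) :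
    K1 * Y₁ = K1 * Y₂ ∧ K1 = (1 - Pj n r + Pj n r * R * Pj n r) * K2 := by
  set Pr := Pj n r with hPrdef
  have hPP : Pr * Pr = Pr := Pj_mul_Pj
  have c1 : Pr * U1 = Pr := by rw [hU1, mul_add, mul_one, hX₁.pj_mul, add_zero]
  have c2 : Pr * U2 = Pr := by rw [hU2, mul_add, mul_one, hX₂.pj_mul, add_zero]
  have cK1 : Pr * K1 = K1 * Pr := hK1.pj_comm
  have cK2 : Pr * K2 = K2 * Pr := hK2.pj_comm
  have yl1 : Pr * Y₁ = Y₁ := hY₁.pj_mul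
  have yl2 : Pr * Y₂ = Y₂ := hY₂.pj_mul
  have yr1 : Y₁ * Pr = 0 := hY₁.mul_pj
  have yr2 : Y₂ * Pr = 0 := hY₂.mul_pj
  have hLHS : Pr * (U1 * K1 * V1) = K1 * Pr + K1 * Y₁ := by
    conv_lhs => rw [← mul_assoc, ← mul_assoc, c1, cK1, hV1, mul_add, mul_one, mul_assoc, yl1]
  have hRHS : Pr * (R * (U2 * K2 * V2)) =
      (Pr * R) * (K2 * Pr) + ((Pr * R) * (K2 * Pr)) * Y₂ := by
    conv_lhs => rw [← mul_assoc, hRproj, mul_assoc, ← mul_assoc Pr (U2 * K2) V2,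
      ← mul_assoc Pr U2 K2, c2, cK2, hV2, mul_add, mul_one, mul_add,
      ← mul_assoc (Pr * R) (K2 * Pr) Y₂]
  have hstar : K1 * Pr + K1 * Y₁ =
      (Pr * R) * (K2 * Pr) + ((Pr * R) * (K2 * Pr)) * Y₂ := by
    rw [← hLHS, ← hRHS, heq]
  have e1 : (K1 * Pr + K1 * Y₁) * Pr = K1 * Pr := by
    rw [add_mul, mul_assoc, hPP, mul_assoc, yr1, mul_zero, add_zero]
  have e2 : ((Pr * R) * (K2 * Pr) + ((Pr * R) * (K2 * Pr)) * Y₂) * Pr =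
      (Pr * R) * (K2 * Pr) := by
    rw [add_mul, mul_assoc ((Pr * R) * (K2 * Pr)) Y₂ Pr, yr2, mul_zero, add_zero,
      mul_assoc (Pr * R) (K2 * Pr) Pr, mul_assoc K2 Pr Pr, hPP]
  have h2 : K1 * Pr = (Pr * R) * (K2 * Pr) := by rw [← e1, hstar, e2]
  have hY12 : K1 * Y₁ = K1 * Y₂ := by
    have h3 := hstar
    rw [← h2] at h3
    have h4 := add_left_cancel h3
    rw [h4, mul_assoc, yl2]
  refine ⟨hY12, ?_⟩
  have t1 : ((Pr * R) * Pr) * K2 = K1 * Pr := by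
    rw [mul_assoc, cK2, ← h2]
  have t2 : K2 - Pr * K2 = 1 - Pr := by
    have h4 := hK2.mul_one_sub_pj
    rw [mul_sub, mul_one] at h4
    rw [cK2]; exact h4
  have t3 : K1 - K1 * Pr = 1 - Pr := by
    have h4 := hK1.mul_one_sub_pj
    rw [mul_sub, mul_one] at h4
    exact h4
  calc K1 = (K1 - K1 * Pr) + K1 * Pr := by rw [sub_add_cancel]
    _ = (1 - Pr) + K1 * Pr := by rw [t3]
    _ = (K2 - Pr * K2) + K1 * Pr := by rw [t2]
    _ = (1 - Pr) * K2 + ((Pr * R) * Pr) * K2 := by rw [sub_mul, one_mul, t1]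
    _ = (1 - Pr + Pr * R * Pr) * K2 := by rw [add_mul]

theorem part_one (n r : ℕ) (hn : r < n)
    (u₁ u₂ p₁ p₂ q₁ q₂ v₁ v₂ : GL (Fin n) ℝ)
    (hu₁ : u₁ ∈ Ugroup n r) (hu₂ : u₂ ∈ Ugroup n r)
    (hp₁ : p₁ ∈ Pgroup' n r) (hp₂ : p₂ ∈ Pgroup' n r)
    (hq₁ : q₁ ∈ Qgroup' n r) (hq₂ : q₂ ∈ Qgroup' n r)
    (hv₁ : v₁ ∈ Ubar n r) (hv₂ : v₂ ∈ Ubar n r)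
    (hρ : (u₁ * p₁ * q₁ * v₁) * (u₂ * p₂ * q₂ * v₂)⁻¹ ∈ RSgroup n r) :
    u₁ = u₂ ∧ q₁ = q₂ ∧ v₁ = v₂ ∧ p₂ * p₁⁻¹ ∈ Ngroup' n r := by
  classical
  set ρ : GL (Fin n) ℝ := (u₁ * p₁ * q₁ * v₁) * (u₂ * p₂ * q₂ * v₂)⁻¹ with hρdef
  have hM : u₁ * p₁ * q₁ * v₁ = ρ * (u₂ * p₂ * q₂ * v₂) := by
    rw [hρdef, inv_mul_cancel_right]
  -- matrix-level data
  have hX₁ : SuppX r ((↑u₁ : Mn n) - 1) := mem_U_supp hu₁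
  have hX₂ : SuppX r ((↑u₂ : Mn n) - 1) := mem_U_supp hu₂
  have hY₁ : SuppY r ((↑v₁ : Mn n) - 1) := mem_Ubar_supp hv₁
  have hY₂ : SuppY r ((↑v₂ : Mn n) - 1) := mem_Ubar_supp hv₂
  have hU1 : (↑u₁ : Mn n) = 1 + ((↑u₁ : Mn n) - 1) := by abel
  have hU2 : (↑u₂ : Mn n) = 1 + ((↑u₂ : Mn n) - 1) := by abel
  have hV1 : (↑v₁ : Mn n) = 1 + ((↑v₁ : Mn n) - 1) := by abel
  have hV2 : (↑v₂ : Mn n) = 1 + ((↑v₂ : Mn n) - 1) := by abel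
  have hK1 : Dpred r ((↑p₁ : Mn n) * (↑q₁ : Mn n)) := Dpred.mul hp₁.1 hq₁.1
  have hK2 : Dpred r ((↑p₂ : Mn n) * (↑q₂ : Mn n)) := Dpred.mul hp₂.1 hq₂.1
  have hRproj : Pj n r * (↑ρ : Mn n) = Pj n r * (↑ρ : Mn n) * Pj n r := RS_pj hρ
  have heq : (↑u₁ : Mn n) * ((↑p₁ : Mn n) * (↑q₁ : Mn n)) * (↑v₁ : Mn n) =
      (↑ρ : Mn n) * ((↑u₂ : Mn n) * ((↑p₂ : Mn n) * (↑q₂ : Mn n)) * (↑v₂ : Mn n)) := by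
    have := congrArg (fun z : GL (Fin n) ℝ => (↑z : Mn n)) hM
    simpa [Units.val_mul, mul_assoc] using this
  obtain ⟨hY12, hk⟩ := key_step hU1 hU2 hV1 hV2 hX₁ hX₂ hY₁ hY₂ hK1 hK2 hRproj heq
  -- v₁ = v₂
  have hYeq : ((↑v₁ : Mn n) - 1) = ((↑v₂ : Mn n) - 1) := by
    have := unit_cancel_left (p₁ * q₁) (A := (↑v₁ : Mn n) - 1) (B := (↑v₂ : Mn n) - 1) ?_
    · exact this
    · rw [Units.val_mul]; exact hY12
  have hveq : v₁ = v₂ := Units.ext (sub_left_inj.mp hYeq)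
  -- ν and its value
  set ν : GL (Fin n) ℝ := (p₁ * q₁) * (p₂ * q₂)⁻¹ with hνdef
  set n' : Mn n := 1 - Pj n r + Pj n r * (↑ρ : Mn n) * Pj n r with hn'def
  have hNn' : Npred r n' := Npred_n' hρ
  have hk' : (↑(p₁ * q₁) : Mn n) = n' * (↑(p₂ * q₂) : Mn n) := by
    rw [Units.val_mul, Units.val_mul]; exact hk
  have hνval : (↑ν : Mn n) = n' := by
    have hval2 : (↑(p₂ * q₂) : Mn n) * (↑((p₂ * q₂)⁻¹) : Mn n) = 1 := by
      rw [← Units.val_mul, mul_inv_cancel, Units.val_one]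
    calc (↑ν : Mn n) = (↑(p₁ * q₁) : Mn n) * (↑((p₂ * q₂)⁻¹) : Mn n) := by
          rw [hνdef, Units.val_mul]
      _ = (n' * (↑(p₂ * q₂) : Mn n)) * (↑((p₂ * q₂)⁻¹) : Mn n) := by rw [hk']
      _ = n' * ((↑(p₂ * q₂) : Mn n) * (↑((p₂ * q₂)⁻¹) : Mn n)) := by rw [mul_assoc]
      _ = n' := by rw [hval2, mul_one]
  have hp1eq : p₁ * q₁ = ν * (p₂ * q₂) := by rw [hνdef, inv_mul_cancel_right]
  -- q₁ = q₂
  have hQ : q₂ * q₁⁻¹ = p₂⁻¹ * ν⁻¹ * p₁ := by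
    have h7 : ν⁻¹ * (p₁ * q₁) = p₂ * q₂ := by rw [hp1eq, inv_mul_cancel_left]
    have h8 : p₂⁻¹ * (ν⁻¹ * (p₁ * q₁)) = q₂ := by rw [h7, inv_mul_cancel_left]
    calc q₂ * q₁⁻¹ = p₂⁻¹ * (ν⁻¹ * (p₁ * q₁)) * q₁⁻¹ := by rw [h8]
      _ = p₂⁻¹ * ν⁻¹ * p₁ := by group
  have hc : ((⟨r, hn⟩ : Fin n) : ℕ) = r := rfl
  have hq21_one : (↑(q₂ * q₁⁻¹) : Mn n) = 1 := by
    have hfix : ∀ j : Fin n, FixC (↑(q₂ * q₁⁻¹) : Mn n) j := by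
      intro j
      by_cases hj : (j : ℕ) = r
      · have hjc : j = ⟨r, hn⟩ := Fin.ext hj
        subst hjc
        rw [hQ, Units.val_mul, Units.val_mul]
        have f1 : FixC (↑p₁ : Mn n) ⟨r, hn⟩ := mem_P_fixC hn hp₁
        have f2 : FixC (↑(ν⁻¹) : Mn n) ⟨r, hn⟩ := by
          refine FixC.inv (A := (↑ν : Mn n)) ?_ ?_
          · rw [← Units.val_mul, inv_mul_cancel, Units.val_one]
          · rw [hνval]; exact hNn'.fixC (le_of_eq hc)
        have f3 : FixC (↑(p₂⁻¹) : Mn n) ⟨r, hn⟩ := by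
          refine FixC.inv (A := (↑p₂ : Mn n)) ?_ (mem_P_fixC hn hp₂)
          rw [← Units.val_mul, inv_mul_cancel, Units.val_one]
        exact (f3.mul f2).mul f1
      · rw [Units.val_mul]
        have f1 : FixC (↑(q₁⁻¹) : Mn n) j := by
          refine FixC.inv (A := (↑q₁ : Mn n)) ?_ (mem_Q_fixC hq₁ hj)
          rw [← Units.val_mul, inv_mul_cancel, Units.val_one]
        exact (mem_Q_fixC hq₂ hj).mul f1
    ext i j
    rw [hfix j i, Matrix.one_apply]
  have hqeq : q₁ = q₂ := by
    have : q₂ * q₁⁻¹ = 1 := Units.ext (by rw [hq21_one, Units.val_one])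
    have := mul_inv_eq_one.mp this
    exact this.symm
  -- p₂ * p₁⁻¹ ∈ N'
  have hp1ν : p₁ = ν * p₂ := by
    have h8 : p₁ * q₁ = ν * p₂ * q₁ := by rw [hp1eq, hqeq]; group
    calc p₁ = p₁ * q₁ * q₁⁻¹ := by group
      _ = ν * p₂ * q₁ * q₁⁻¹ := by rw [h8]
      _ = ν * p₂ := by group
  have hp21 : p₂ * p₁⁻¹ = ν⁻¹ := by rw [hp1ν]; group
  have hNinv : Npred r (↑(ν⁻¹) : Mn n) := by
    refine hNn'.inv ?_ ?_
    · rw [← hνval, ← Units.val_mul, mul_inv_cancel, Units.val_one]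
    · rw [← hνval, ← Units.val_mul, inv_mul_cancel, Units.val_one]
  have hpmem : p₂ * p₁⁻¹ ∈ Ngroup' n r := by
    rw [hp21]
    exact ⟨hNinv.1, hNinv.2⟩
  -- u₁ = u₂
  have hρν : ρ = u₁ * ν * u₂⁻¹ := by
    have h9 : u₁ * (ν * (p₂ * q₂)) * v₂ = ρ * (u₂ * (p₂ * q₂) * v₂) := by
      calc u₁ * (ν * (p₂ * q₂)) * v₂ = u₁ * (p₁ * q₁) * v₂ := by rw [← hp1eq]
        _ = u₁ * p₁ * q₁ * v₁ := by rw [hveq]; group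
        _ = ρ * (u₂ * p₂ * q₂ * v₂) := hM
        _ = ρ * (u₂ * (p₂ * q₂) * v₂) := by group
    have h10 : u₁ * ν = ρ * u₂ := by
      have := h9
      have h11 : u₁ * (ν * (p₂ * q₂)) * v₂ * v₂⁻¹ * (p₂ * q₂)⁻¹ =
          ρ * (u₂ * (p₂ * q₂) * v₂) * v₂⁻¹ * (p₂ * q₂)⁻¹ := by rw [h9]
      calc u₁ * ν = u₁ * (ν * (p₂ * q₂)) * v₂ * v₂⁻¹ * (p₂ * q₂)⁻¹ := by group
        _ = ρ * (u₂ * (p₂ * q₂) * v₂) * v₂⁻¹ * (p₂ * q₂)⁻¹ := h11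
        _ = ρ * u₂ := by group
    calc ρ = ρ * u₂ * u₂⁻¹ := by group
      _ = u₁ * ν * u₂⁻¹ := by rw [← h10]
  have hu2inv : (↑(u₂⁻¹) : Mn n) = 1 - ((↑u₂ : Mn n) - 1) :=
    unip_inv (hX₂.mul_eq_zero hX₂) hU2
  have hn'X2 : n' * ((↑u₂ : Mn n) - 1) = ((↑u₂ : Mn n) - 1) := by
    rw [hn'def, add_mul, sub_mul, one_mul, hX₂.pj_mul, sub_zero, mul_assoc, hX₂.pj_mul,
      mul_zero, add_zero]
  have hX1X2 : ((↑u₁ : Mn n) - 1) * (((↑u₂ : Mn n) - 1)) = 0 := by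
    ext i j
    rw [Matrix.mul_apply]
    refine Finset.sum_eq_zero fun k _ => ?_
    by_cases h0 : ((↑u₁ : Mn n) - 1) i k = 0
    · simp [h0]
    · have h1 := (hX₁ i k h0).2
      have h2 : ((↑u₂ : Mn n) - 1) k j = 0 := by
        by_contra hB0
        have := (hX₂ k j hB0).1
        omega
      simp [h2]
  have hRexp : (↑ρ : Mn n) = n' + ((↑u₁ : Mn n) - 1) * n' - ((↑u₂ : Mn n) - 1) := by
    have h12 : (↑ρ : Mn n) = (↑u₁ : Mn n) * (↑ν : Mn n) * (↑(u₂⁻¹) : Mn n) := by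
      rw [hρν, Units.val_mul, Units.val_mul]
    rw [h12, hνval, hu2inv]
    conv_lhs => rw [hU1]
    have expand : ((1 : Mn n) + ((↑u₁ : Mn n) - 1)) * n' * (1 - (((↑u₂ : Mn n) - 1))) =
        n' + ((↑u₁ : Mn n) - 1) * n' - (n' * (((↑u₂ : Mn n) - 1)) +
          ((↑u₁ : Mn n) - 1) * (n' * (((↑u₂ : Mn n) - 1)))) := by noncomm_ring
    rw [expand, hn'X2, hX1X2, add_zero]
  have hXeq : ∀ i : Fin n, (i : ℕ) < r →
      ((↑u₁ : Mn n) - 1) i ⟨r, hn⟩ = ((↑u₂ : Mn n) - 1) i ⟨r, hn⟩ := by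
    intro i hi
    have h0 : (↑ρ : Mn n) i ⟨r, hn⟩ = 0 := hρ.2.2 i ⟨r, hn⟩ hi rfl
    rw [hRexp, Matrix.sub_apply, Matrix.add_apply] at h0
    have hine : i ≠ (⟨r, hn⟩ : Fin n) := by
      intro h
      rw [h] at hi
      exact absurd hi (lt_irrefl r)
    have hfixn' : FixC n' ⟨r, hn⟩ := hNn'.fixC (le_of_eq hc)
    have hn'ic : n' i ⟨r, hn⟩ = 0 := by rw [hfixn' i]; simp [hine]
    have hX1n' : (((↑u₁ : Mn n) - 1) * n') i ⟨r, hn⟩ = ((↑u₁ : Mn n) - 1) i ⟨r, hn⟩ :=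
      hfixn'.mul_apply _ i
    rw [hn'ic, hX1n', zero_add] at h0
    linarith
  have hXall : ((↑u₁ : Mn n) - 1) = ((↑u₂ : Mn n) - 1) := by
    ext i j
    by_cases hcnd : (i : ℕ) < r ∧ (j : ℕ) = r
    · have hjc : j = (⟨r, hn⟩ : Fin n) := Fin.ext hcnd.2
      subst hjc
      exact hXeq i hcnd.1
    · have h1 : ((↑u₁ : Mn n) - 1) i j = 0 := by
        by_contra h
        exact hcnd (hX₁ i j h)
      have h2 : ((↑u₂ : Mn n) - 1) i j = 0 := by
        by_contra h
        exact hcnd (hX₂ i j h)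
      rw [h1, h2]
  have hueq : u₁ = u₂ := Units.ext (sub_left_inj.mp hXall)
  exact ⟨hueq, hqeq, hveq, hpmem⟩



/-! ### Part (ii) : matrix algebra for the decomposition -/

/-- bottom-right corner embedding. -/
def emb (n s : ℕ) : Fin (n - s) → Fin n := fun i => ⟨s + (i : ℕ), by omega⟩

lemma kmat_apply (A : Mn n) (i j : Fin n) :
    (1 - Pj n r + Pj n r * A * Pj n r) i j
      = (if i = j ∧ (i : ℕ) < r then 1 else 0)
        + (if r ≤ (i : ℕ) ∧ r ≤ (j : ℕ) then A i j else 0) := by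
  rw [Matrix.add_apply, Matrix.sub_apply, mul_Pj, Pj_mul, Pj_apply, Matrix.one_apply]
  rcases eq_or_ne i j with rfl | hne
  · by_cases hi : r ≤ (i : ℕ)
    · have h2 : ¬((i : ℕ) < r) := by omega
      simp [hi, h2]
    · have h2 : (i : ℕ) < r := by omega
      simp [hi, h2]
  · by_cases hi : r ≤ (i : ℕ) <;> by_cases hj : r ≤ (j : ℕ) <;> simp [hi, hj, hne]

lemma Dpred_kmat (A : Mn n) : Dpred r (1 - Pj n r + Pj n r * A * Pj n r) := by
  intro i j hij
  rw [kmat_apply]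
  rcases eq_or_ne i j with rfl | hne
  · have hir : (i : ℕ) < r := by rcases hij with h | h <;> exact h
    have h2 : ¬ r ≤ (i : ℕ) := by omega
    simp [hir, h2]
  · have : ¬(r ≤ (i : ℕ) ∧ r ≤ (j : ℕ)) := by
      rintro ⟨h1, h2⟩
      rcases hij with h | h <;> omega
    simp [hne, this]

lemma det_eq_subdet {s : ℕ} (M : Mn n)
    (hcols : ∀ i j : Fin n, (j : ℕ) < s → M i j = if i = j then 1 else 0) :
    M.det = (M.submatrix (emb n s) (emb n s)).det := by
  by_cases hs : s ≤ n
  swap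
  · -- n < s : all columns are standard, M = 1, and the submatrix is empty
    haveI : IsEmpty (Fin (n - s)) := ⟨fun i => by have := i.isLt; omega⟩
    have hM1 : M = 1 := by
      ext i j
      rw [hcols i j (by omega), Matrix.one_apply]
    rw [hM1, Matrix.det_one, Matrix.det_isEmpty]
  · set e : Fin s ⊕ Fin (n - s) ≃ Fin n := finSumFinEquiv.trans (finCongr (by omega)) with hedef
    have he1 : ∀ a : Fin s, ((e (Sum.inl a)) : ℕ) = (a : ℕ) := by
      intro a; simp [hedef]
    have he2 : ∀ b : Fin (n - s), ((e (Sum.inr b)) : ℕ) = s + (b : ℕ) := by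
      intro b; simp [hedef]
    have hM : M.submatrix e e =
        Matrix.fromBlocks 1
          (Matrix.of fun a b => M (e (Sum.inl a)) (e (Sum.inr b))) 0
          (M.submatrix (emb n s) (emb n s)) := by
      ext i j
      cases i with
      | inl a =>
        cases j with
        | inl a' =>
          rw [Matrix.submatrix_apply, Matrix.fromBlocks_apply₁₁,
            hcols _ _ (by rw [he1]; exact a'.isLt), Matrix.one_apply]
          by_cases h : a = a'
          · subst h; simp
          · have : e (Sum.inl a) ≠ e (Sum.inl a') := by
              intro hc
              refine h (Fin.ext ?_)
              rw [← he1 a, ← he1 a', hc]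
            simp [h, this]
        | inr b => rfl
      | inr b =>
        cases j with
        | inl a' =>
          rw [Matrix.submatrix_apply, Matrix.fromBlocks_apply₂₁,
            hcols _ _ (by rw [he1]; exact a'.isLt)]
          have : e (Sum.inr b) ≠ e (Sum.inl a') := by
            intro hc
            have hv : ((e (Sum.inr b)) : ℕ) = ((e (Sum.inl a')) : ℕ) := by rw [hc]
            rw [he1, he2] at hv
            have := a'.isLt
            omega
          simp [this]
        | inr b' =>
          rw [Matrix.submatrix_apply, Matrix.fromBlocks_apply₂₂, Matrix.submatrix_apply]
          congr 1 <;> exact Fin.ext (by rw [he2]; rfl)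
    calc M.det = (M.submatrix e e).det := (Matrix.det_submatrix_equiv_self e M).symm
      _ = _ := by rw [hM, Matrix.det_fromBlocks_zero₂₁, Matrix.det_one, one_mul]

/-- the two minors that control the decomposition. -/
def f1 (n r : ℕ) (A : Mn n) : ℝ := (A.submatrix (emb n r) (emb n r)).det

def f2 (n r : ℕ) (A : Mn n) : ℝ := (A.submatrix (emb n (r + 1)) (emb n (r + 1))).det

/-! ### decomposition construction -/

/-- the single-entry matrix at `(r, r)`. -/
def Ecm (n r : ℕ) : Mn n := Matrix.of fun i j => if (i : ℕ) = r ∧ (j : ℕ) = r then 1 else 0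

lemma mul_Ecm (hn : r < n) (A : Mn n) (i j : Fin n) :
    (A * Ecm n r) i j = if (j : ℕ) = r then A i ⟨r, hn⟩ else 0 := by
  rw [Matrix.mul_apply]
  by_cases hj : (j : ℕ) = r
  · rw [if_pos hj]
    have hsum : ∀ k : Fin n, A i k * Ecm n r k j
        = if k = (⟨r, hn⟩ : Fin n) then A i k else 0 := by
      intro k
      by_cases hk : k = (⟨r, hn⟩ : Fin n)
      · subst hk; simp [Ecm, hj]
      · have h2 : ¬((k : ℕ) = r ∧ (j : ℕ) = r) := by
          rintro ⟨h1, -⟩; exact hk (Fin.ext h1)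
        simp [Ecm, h2, hk]
    rw [Finset.sum_congr rfl fun k _ => hsum k]
    exact Fintype.sum_ite_eq' _ _
  · rw [if_neg hj]
    refine Finset.sum_eq_zero fun k _ => ?_
    have h2 : ¬((k : ℕ) = r ∧ (j : ℕ) = r) := fun h => hj h.2
    simp [Ecm, h2]

lemma Ecm_mul_Ecm (hn : r < n) : Ecm n r * Ecm n r = Ecm n r := by
  ext i j
  rw [mul_Ecm hn]
  by_cases hj : (j : ℕ) = r
  · simp [hj, Ecm]
  · simp [hj, Ecm]

lemma unip_mul₁ (X : Mn n) (hX2 : X * X = 0) : (1 + X) * (1 - X) = 1 := by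
  have h : ((1 : Mn n) + X) * (1 - X) = 1 - X * X := by noncomm_ring
  rw [h, hX2, sub_zero]

lemma unip_mul₂ (X : Mn n) (hX2 : X * X = 0) : (1 - X) * (1 + X) = 1 := by
  have h : ((1 : Mn n) - X) * (1 + X) = 1 - X * X := by noncomm_ring
  rw [h, hX2, sub_zero]

lemma suppY_sandwich (W : Mn n) : SuppY r (Pj n r * W * (1 - Pj n r)) := by
  intro i j h0
  rw [Matrix.mul_sub, mul_one, Matrix.sub_apply, mul_Pj, Pj_mul] at h0
  by_cases hi : r ≤ (i : ℕ) <;> by_cases hj : r ≤ (j : ℕ)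
  · simp [hi, hj] at h0
  · exact ⟨hi, by omega⟩
  · simp [hi, hj] at h0
  · simp [hi, hj] at h0

lemma suppX_sandwich (hn : r < n) (W : Mn n) : SuppX r ((1 - Pj n r) * W * Ecm n r) := by
  intro i j h0
  rw [mul_Ecm hn, Matrix.sub_mul, one_mul, Matrix.sub_apply, Pj_mul] at h0
  by_cases hj : (j : ℕ) = r
  · by_cases hi : r ≤ (i : ℕ)
    · simp [hi, hj] at h0
    · exact ⟨by omega, hj⟩
  · simp [hj] at h0

lemma mem_U_of {w : GL (Fin n) ℝ} {X : Mn n} (hw : (↑w : Mn n) = 1 + X) (hX : SuppX r X) :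
    w ∈ Ugroup n r := by
  constructor
  · intro i
    have hXd : X i i = 0 := by
      by_contra h
      obtain ⟨h1, h2⟩ := hX i i h
      omega
    rw [hw, Matrix.add_apply, Matrix.one_apply_eq, hXd, add_zero]
  · intro i j hne hcond
    have hXd : X i j = 0 := by
      by_contra h
      exact hcond (hX i j h)
    rw [hw, Matrix.add_apply, Matrix.one_apply_ne hne, hXd, add_zero]

lemma mem_Ubar_of {w : GL (Fin n) ℝ} {Y : Mn n} (hw : (↑w : Mn n) = 1 + Y) (hY : SuppY r Y) :
    w ∈ Ubar n r := by
  constructor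
  · intro i
    have hYd : Y i i = 0 := by
      by_contra h
      obtain ⟨h1, h2⟩ := hY i i h
      omega
    rw [hw, Matrix.add_apply, Matrix.one_apply_eq, hYd, add_zero]
  · intro i j hne hcond
    have hYd : Y i j = 0 := by
      by_contra h
      exact hcond (hY i j h)
    rw [hw, Matrix.add_apply, Matrix.one_apply_ne hne, hYd, add_zero]

lemma FixR.mul_apply {A : Mn n} {i₀ : Fin n} (hA : FixR A i₀) (B : Mn n) (j : Fin n) :
    (A * B) i₀ j = B i₀ j := by
  rw [Matrix.mul_apply]
  calc (∑ k, A i₀ k * B k j) = ∑ k, (if k = i₀ then B k j else 0) := by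
        refine Finset.sum_congr rfl fun k _ => ?_
        rw [hA k]
        rcases eq_or_ne i₀ k with rfl | h
        · simp
        · simp [h, Ne.symm h]
    _ = B i₀ j := Fintype.sum_ite_eq' _ _

lemma RS_of (hn : r < n) {w : GL (Fin n) ℝ}
    (hw : Pj n r * (↑w : Mn n) = Pj n r)
    (hcol : ∀ i : Fin n, (i : ℕ) < r → (↑w : Mn n) i ⟨r, hn⟩ = 0) :
    w ∈ RSgroup n r := by
  have hrow : ∀ i j : Fin n, r ≤ (i : ℕ) → (↑w : Mn n) i j = if i = j then 1 else 0 := by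
    intro i j hi
    have := congrFun (congrFun hw i) j
    rw [Pj_mul, Pj_apply, if_pos hi] at this
    rw [this]
    by_cases h : i = j
    · subst h; simp [hi]
    · simp [h]
  refine ⟨?_, ?_, ?_⟩
  · intro i j hi hij
    rw [hrow i j hi]
    have : i ≠ j := fun h => by subst h; omega
    simp [this]
  · intro i hi
    rw [hrow i i hi]
    simp
  · intro i j hi hj
    have : j = (⟨r, hn⟩ : Fin n) := Fin.ext hj
    subst this
    exact hcol i hi

lemma inv_corner {Rm Rminv : Mn n} (hRR : Rm * Rminv = 1)
    (hPRinv : Pj n r * Rminv = Pj n r) :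
    ((1 - Pj n r) * Rm * (1 - Pj n r) + Pj n r) *
      ((1 - Pj n r) * Rminv * (1 - Pj n r) + Pj n r) = 1 := by
  set Pr := Pj n r with hPrdef
  have hPP : Pr * Pr = Pr := Pj_mul_Pj
  have z1 : (1 - Pr) * Pr = 0 := by rw [sub_mul, one_mul, hPP, sub_self]
  have z2 : Pr * (1 - Pr) = 0 := by rw [mul_sub, mul_one, hPP, sub_self]
  have z3 : (1 - Pr) * (1 - Pr) = 1 - Pr := by rw [mul_sub, mul_one, z1, sub_zero]
  have hPrB : Pr * ((1 - Pr) * Rminv * (1 - Pr) + Pr) = Pr := by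
    rw [mul_add, ← mul_assoc, ← mul_assoc, z2, zero_mul, zero_mul, zero_add, hPP]
  have hTP : ((1 - Pr) * Rm * (1 - Pr)) * Pr = 0 := by
    rw [mul_assoc, z1, mul_zero]
  have hmid : (1 - Pr) * (((1 - Pr) * Rminv) * (1 - Pr)) = ((1 - Pr) * Rminv) * (1 - Pr) := by
    rw [← mul_assoc, ← mul_assoc, z3]
  have hkey : ((1 - Pr) * Rm * (1 - Pr)) * ((1 - Pr) * Rminv * (1 - Pr)) = 1 - Pr := by
    calc ((1 - Pr) * Rm * (1 - Pr)) * ((1 - Pr) * Rminv * (1 - Pr))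
        = ((1 - Pr) * Rm) * ((1 - Pr) * (((1 - Pr) * Rminv) * (1 - Pr))) := by
          rw [mul_assoc ((1 - Pr) * Rm) (1 - Pr) _]
      _ = ((1 - Pr) * Rm) * (((1 - Pr) * Rminv) * (1 - Pr)) := by rw [hmid]
      _ = ((1 - Pr) * Rm) * ((Rminv - Pr) * (1 - Pr)) := by
          rw [sub_mul 1 Pr Rminv, one_mul, hPRinv]
      _ = ((1 - Pr) * Rm) * (Rminv * (1 - Pr) - Pr * (1 - Pr)) := by
          rw [sub_mul Rminv Pr (1 - Pr)]
      _ = ((1 - Pr) * Rm) * (Rminv * (1 - Pr)) := by rw [z2, sub_zero]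
      _ = (1 - Pr) * (Rm * (Rminv * (1 - Pr))) := by rw [mul_assoc]
      _ = (1 - Pr) * ((Rm * Rminv) * (1 - Pr)) := by rw [← mul_assoc Rm Rminv _]
      _ = (1 - Pr) * (1 - Pr) := by rw [hRR, one_mul]
      _ = 1 - Pr := z3
  calc ((1 - Pr) * Rm * (1 - Pr) + Pr) * ((1 - Pr) * Rminv * (1 - Pr) + Pr)
      = ((1 - Pr) * Rm * (1 - Pr)) * ((1 - Pr) * Rminv * (1 - Pr) + Pr)
        + Pr * ((1 - Pr) * Rminv * (1 - Pr) + Pr) := by rw [add_mul]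
    _ = (((1 - Pr) * Rm * (1 - Pr)) * ((1 - Pr) * Rminv * (1 - Pr))
        + ((1 - Pr) * Rm * (1 - Pr)) * Pr) + Pr := by rw [mul_add, hPrB]
    _ = (1 - Pr) + Pr := by rw [hkey, hTP, add_zero]
    _ = 1 := by rw [sub_add_cancel]

lemma kmat_cols (A : Mn n) (i j : Fin n) (hj : (j : ℕ) < r) :
    (1 - Pj n r + Pj n r * A * Pj n r) i j = if i = j then 1 else 0 := by
  rw [kmat_apply]
  have h2 : ¬(r ≤ (i : ℕ) ∧ r ≤ (j : ℕ)) := by rintro ⟨-, h⟩; omega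
  rcases eq_or_ne i j with rfl | hne
  · simp [h2, hj]
  · simp [h2, hne]

lemma decomp (hn : r < n) (g : GL (Fin n) ℝ)
    (hd1 : f1 n r (↑g) ≠ 0) (hd2 : f2 n r (↑g) ≠ 0) :
    ∃ ρ ∈ RSgroup n r, ∃ u ∈ Ugroup n r, ∃ p ∈ Pgroup' n r, ∃ q ∈ Qgroup' n r,
      ∃ v ∈ Ubar n r, g = ρ * u * p * q * v := by
  classical
  set Pr := Pj n r with hPrdef
  set Ec := Ecm n r with hEcdef
  set G : Mn n := (↑g : Mn n) with hGdef
  have hPP : Pr * Pr = Pr := Pj_mul_Pj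
  -- the matrix k'
  set k' : Mn n := 1 - Pr + Pr * G * Pr with hk'def
  have hk'cols : ∀ i j : Fin n, (j : ℕ) < r → k' i j = if i = j then 1 else 0 :=
    fun i j hj => kmat_cols G i j hj
  have hk'sub : k'.submatrix (emb n r) (emb n r) = G.submatrix (emb n r) (emb n r) := by
    ext i j
    rw [Matrix.submatrix_apply, Matrix.submatrix_apply, hk'def, kmat_apply]
    have hi : r ≤ ((emb n r i : Fin n) : ℕ) := by simp [emb]
    have hj : r ≤ ((emb n r j : Fin n) : ℕ) := by simp [emb]
    have hd : ¬(emb n r i = emb n r j ∧ ((emb n r i : Fin n) : ℕ) < r) := by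
      rintro ⟨-, h⟩; omega
    rw [if_neg hd, if_pos ⟨hi, hj⟩, zero_add]
  have hdetk' : k'.det ≠ 0 := by
    rw [det_eq_subdet k' hk'cols, hk'sub]
    exact hd1
  set kU : GL (Fin n) ℝ := Matrix.GeneralLinearGroup.mkOfDetNeZero k' hdetk' with hkUdef
  have hkval : (↑kU : Mn n) = k' := rfl
  set kinv : Mn n := (↑(kU⁻¹) : Mn n) with hkinvdef
  have hkk : k' * kinv = 1 := by
    rw [← hkval, hkinvdef, ← Units.val_mul, mul_inv_cancel, Units.val_one]
  have hk'k : kinv * k' = 1 := by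
    rw [← hkval, hkinvdef, ← Units.val_mul, inv_mul_cancel, Units.val_one]
  have hDk' : Dpred r k' := Dpred_kmat G
  have hcommk : Pr * k' = k' * Pr := hDk'.pj_comm
  have hPrk' : Pr * k' = Pr * G * Pr := by
    rw [hk'def, mul_add, mul_sub, mul_one, hPP, sub_self, zero_add, ← mul_assoc, ← mul_assoc,
      hPP]
  -- v
  set Yv : Mn n := Pr * (kinv * G) * (1 - Pr) with hYvdef
  have hYv : SuppY r Yv := suppY_sandwich _
  have hYv2 : Yv * Yv = 0 := hYv.mul_eq_zero hYv
  set vU : GL (Fin n) ℝ := ⟨1 + Yv, 1 - Yv, unip_mul₁ Yv hYv2, unip_mul₂ Yv hYv2⟩ with hvUdef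
  have hvval : (↑vU : Mn n) = 1 + Yv := rfl
  have hv_mem : vU ∈ Ubar n r := mem_Ubar_of hvval hYv
  have hvinv : (↑(vU⁻¹) : Mn n) = 1 - Yv := rfl
  -- the relation Pr G = Pr k' (1 + Yv)
  have hPkP : Pr * k' * Pr = Pr * k' := by
    rw [hcommk, mul_assoc, hPP]
  have hPG : Pr * G = Pr * k' * (1 + Yv) := by
    have h1 : Pr * k' * Yv = Pr * G * (1 - Pr) := by
      calc Pr * k' * Yv = (Pr * k') * (Pr * (kinv * G) * (1 - Pr)) := by rw [hYvdef]
        _ = (((Pr * k') * Pr) * (kinv * G)) * (1 - Pr) := by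
            rw [← mul_assoc, ← mul_assoc]
        _ = ((Pr * k') * (kinv * G)) * (1 - Pr) := by rw [hPkP]
        _ = ((Pr * (k' * kinv)) * G) * (1 - Pr) := by
            rw [← mul_assoc (Pr * k') kinv G, mul_assoc Pr k' kinv]
        _ = (Pr * G) * (1 - Pr) := by rw [hkk, mul_one]
    calc Pr * G = Pr * G * Pr + ((Pr * G) - (Pr * G) * Pr) := by abel
      _ = Pr * k' + ((Pr * G) - (Pr * G) * Pr) := by rw [hPrk']
      _ = Pr * k' + (Pr * G) * (1 - Pr) := by rw [mul_sub, mul_one]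
      _ = Pr * k' + Pr * k' * Yv := by rw [h1]
      _ = Pr * k' * (1 + Yv) := by rw [mul_add (Pr * k') 1 Yv, mul_one]
  -- R0
  set R0U : GL (Fin n) ℝ := g * vU⁻¹ * kU⁻¹ with hR0Udef
  set R0 : Mn n := (↑R0U : Mn n) with hR0def
  have hR0val : R0 = G * (1 - Yv) * kinv := by
    rw [hR0def, hR0Udef, Units.val_mul, Units.val_mul, hvinv, ← hkinvdef, ← hGdef]
  have hPR0 : Pr * R0 = Pr := by
    calc Pr * R0 = ((Pr * G) * (1 - Yv)) * kinv := by rw [hR0val, ← mul_assoc, ← mul_assoc]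
      _ = (((Pr * k') * (1 + Yv)) * (1 - Yv)) * kinv := by rw [hPG]
      _ = ((Pr * k') * ((1 + Yv) * (1 - Yv))) * kinv := by rw [mul_assoc (Pr * k') _ _]
      _ = ((Pr * k') * 1) * kinv := by rw [unip_mul₁ Yv hYv2]
      _ = Pr * (k' * kinv) := by rw [mul_one, mul_assoc]
      _ = Pr := by rw [hkk, mul_one]
  set R0inv : Mn n := (↑(R0U⁻¹) : Mn n) with hR0invdef
  have hR0R : R0 * R0inv = 1 := by
    rw [hR0def, hR0invdef, ← Units.val_mul, mul_inv_cancel, Units.val_one]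
  have hRR0 : R0inv * R0 = 1 := by
    rw [hR0def, hR0invdef, ← Units.val_mul, inv_mul_cancel, Units.val_one]
  have hPR0inv : Pr * R0inv = Pr := by
    calc Pr * R0inv = (Pr * R0) * R0inv := by rw [hPR0]
      _ = Pr * (R0 * R0inv) := by rw [mul_assoc]
      _ = Pr := by rw [hR0R, mul_one]
  -- the corner unit
  set A0 : Mn n := (1 - Pr) * R0 * (1 - Pr) + Pr with hA0def
  set B0 : Mn n := (1 - Pr) * R0inv * (1 - Pr) + Pr with hB0def
  have hAB : A0 * B0 = 1 := inv_corner hR0R hPR0inv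
  have hBA : B0 * A0 = 1 := inv_corner hRR0 hPR0
  have hPrB0 : Pr * B0 = Pr := by
    rw [hB0def, mul_add, ← mul_assoc, ← mul_assoc]
    have z2 : Pr * (1 - Pr) = 0 := by rw [mul_sub, mul_one, hPP, sub_self]
    rw [z2, zero_mul, zero_mul, zero_add, hPP]
  -- u
  set Xh : Mn n := (1 - Pr) * (B0 * R0) * Ec with hXhdef
  have hXh : SuppX r Xh := suppX_sandwich hn _
  have hXh2 : Xh * Xh = 0 := hXh.mul_eq_zero hXh
  set uU : GL (Fin n) ℝ := ⟨1 + Xh, 1 - Xh, unip_mul₁ Xh hXh2, unip_mul₂ Xh hXh2⟩ with huUdef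
  have huval : (↑uU : Mn n) = 1 + Xh := rfl
  have hu_mem : uU ∈ Ugroup n r := mem_U_of huval hXh
  have huinv : (↑(uU⁻¹) : Mn n) = 1 - Xh := rfl
  -- ρ
  set ρU : GL (Fin n) ℝ := R0U * uU⁻¹ with hρUdef
  have hρval : (↑ρU : Mn n) = R0 * (1 - Xh) := by
    rw [hρUdef, Units.val_mul, huinv, hR0def]
  have hPρ : Pr * (↑ρU : Mn n) = Pr := by
    rw [hρval, ← mul_assoc, hPR0, mul_sub, mul_one, hXh.pj_mul, sub_zero]
  have hR0Xh : (1 - Pr) * R0 * Xh = (R0 - Pr) * Ec := by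
    calc (1 - Pr) * R0 * Xh = ((1 - Pr) * R0) * (((1 - Pr) * (B0 * R0)) * Ec) := by
          rw [hXhdef, mul_assoc (1 - Pr) (B0 * R0) Ec]
      _ = (((1 - Pr) * R0) * ((1 - Pr) * (B0 * R0))) * Ec := by rw [← mul_assoc]
      _ = ((((1 - Pr) * R0) * (1 - Pr)) * (B0 * R0)) * Ec := by
          rw [← mul_assoc ((1 - Pr) * R0) (1 - Pr) (B0 * R0)]
      _ = ((A0 - Pr) * (B0 * R0)) * Ec := by rw [hA0def, add_sub_cancel_right]
      _ = (A0 * (B0 * R0) - Pr * (B0 * R0)) * Ec := by rw [sub_mul]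
      _ = ((A0 * B0) * R0 - (Pr * B0) * R0) * Ec := by rw [← mul_assoc, ← mul_assoc]
      _ = (R0 - Pr) * Ec := by rw [hAB, one_mul, hPrB0, hPR0]
  have h1r : (1 - Pr) * R0 = R0 - Pr := by rw [sub_mul, one_mul, hPR0]
  have hEE : Ec * Ec = Ec := by rw [hEcdef]; exact Ecm_mul_Ecm hn
  have hZ0 : (1 - Pr) * (↑ρU : Mn n) * Ec = 0 := by
    calc (1 - Pr) * (↑ρU : Mn n) * Ec
        = ((1 - Pr) * R0 - (1 - Pr) * R0 * Xh) * Ec := by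
          rw [hρval, mul_sub R0 1 Xh, mul_one, mul_sub (1 - Pr) R0 (R0 * Xh),
            ← mul_assoc (1 - Pr) R0 Xh]
      _ = ((R0 - Pr) - (R0 - Pr) * Ec) * Ec := by rw [hR0Xh, h1r]
      _ = (R0 - Pr) * Ec - (R0 - Pr) * (Ec * Ec) := by rw [sub_mul, mul_assoc]
      _ = 0 := by rw [hEE, sub_self]
  have hρ_mem : ρU ∈ RSgroup n r := by
    refine RS_of hn hPρ ?_
    intro i hi
    have h0 := congrFun (congrFun hZ0 i) (⟨r, hn⟩ : Fin n)
    rw [Matrix.zero_apply, hEcdef, mul_Ecm hn, if_pos rfl, sub_mul, one_mul,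
      Matrix.sub_apply, Pj_mul, if_neg (by omega : ¬ r ≤ (i : ℕ)), sub_zero] at h0
    exact h0
  -- p
  set p' : Mn n := k' - k' * Ec + Ec with hp'def
  have hp'col_ne : ∀ i j : Fin n, (j : ℕ) ≠ r → p' i j = k' i j := by
    intro i j hj
    rw [hp'def, Matrix.add_apply, Matrix.sub_apply, hEcdef, mul_Ecm hn, if_neg hj]
    have hEz : Ecm n r i j = 0 := by simp [Ecm, hj]
    rw [hEz, sub_zero, add_zero]
  have hp'col_c : ∀ i j : Fin n, (j : ℕ) = r → p' i j = if (i : ℕ) = r then 1 else 0 := by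
    intro i j hj
    have hjc : j = (⟨r, hn⟩ : Fin n) := Fin.ext hj
    subst hjc
    rw [hp'def, Matrix.add_apply, Matrix.sub_apply, hEcdef, mul_Ecm hn, if_pos rfl,
      sub_self, zero_add]
    simp [Ecm]
  have hp'cols : ∀ i j : Fin n, (j : ℕ) < r + 1 → p' i j = if i = j then 1 else 0 := by
    intro i j hj
    rcases Nat.lt_or_ge (j : ℕ) r with h | h
    · rw [hp'col_ne i j (by omega), hk'cols i j h]
    · have hj' : (j : ℕ) = r := by omega
      rw [hp'col_c i j hj']
      have hjc : j = (⟨r, hn⟩ : Fin n) := Fin.ext hj'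
      subst hjc
      by_cases hi : (i : ℕ) = r
      · rw [if_pos hi, if_pos (Fin.ext hi)]
      · rw [if_neg hi, if_neg (fun h' => hi (by rw [h']))]
  have hp'sub : p'.submatrix (emb n (r + 1)) (emb n (r + 1))
      = G.submatrix (emb n (r + 1)) (emb n (r + 1)) := by
    ext i j
    rw [Matrix.submatrix_apply, Matrix.submatrix_apply]
    have hj : ((emb n (r + 1) j : Fin n) : ℕ) ≠ r := by simp [emb]; omega
    rw [hp'col_ne _ _ hj, hk'def, kmat_apply]
    have hi : r ≤ ((emb n (r + 1) i : Fin n) : ℕ) := by simp [emb]; omega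
    have hj2 : r ≤ ((emb n (r + 1) j : Fin n) : ℕ) := by simp [emb]; omega
    have hd : ¬(emb n (r + 1) i = emb n (r + 1) j ∧ ((emb n (r + 1) i : Fin n) : ℕ) < r) := by
      rintro ⟨-, h⟩; omega
    rw [if_neg hd, if_pos ⟨hi, hj2⟩, zero_add]
  have hdetp' : p'.det ≠ 0 := by
    rw [det_eq_subdet p' hp'cols, hp'sub]
    exact hd2
  set pU : GL (Fin n) ℝ := Matrix.GeneralLinearGroup.mkOfDetNeZero p' hdetp' with hpUdef
  have hpval : (↑pU : Mn n) = p' := rfl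
  have hDp' : Dpred r p' := by
    intro i j hij
    rcases Nat.lt_or_ge (j : ℕ) (r + 1) with h | h
    · exact hp'cols i j h
    · have hi : (i : ℕ) < r := by
        rcases hij with h' | h'
        · exact h'
        · omega
      rw [hp'col_ne i j (by omega), hk'def, kmat_apply]
      have h1 : ¬(i = j ∧ (i : ℕ) < r) := by rintro ⟨rfl, -⟩; omega
      have h2 : ¬(r ≤ (i : ℕ) ∧ r ≤ (j : ℕ)) := by rintro ⟨h', -⟩; omega
      have hne : i ≠ j := fun h' => by subst h'; omega
      rw [if_neg h1, if_neg h2, add_zero, if_neg hne]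
  have hp_mem : pU ∈ Pgroup' n r := by
    constructor
    · intro i j hij
      exact hDp' i j hij
    · intro i j hj
      exact hp'col_c i j hj
  set pinv : Mn n := (↑(pU⁻¹) : Mn n) with hpinvdef
  have hppinv : p' * pinv = 1 := by
    rw [← hpval, hpinvdef, ← Units.val_mul, mul_inv_cancel, Units.val_one]
  have hpinvp : pinv * p' = 1 := by
    rw [← hpval, hpinvdef, ← Units.val_mul, inv_mul_cancel, Units.val_one]
  -- q
  set qU : GL (Fin n) ℝ := pU⁻¹ * kU with hqUdef
  have hqval : (↑qU : Mn n) = pinv * k' := by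
    rw [hqUdef, Units.val_mul, ← hpinvdef, hkval]
  have hcolfix : ∀ j : Fin n, (j : ℕ) ≠ r → ∀ i, (pinv * k') i j = if i = j then 1 else 0 := by
    intro j hj i
    have hsum : ∀ k : Fin n, pinv i k * k' k j = pinv i k * p' k j := by
      intro k; rw [hp'col_ne k j hj]
    rw [Matrix.mul_apply, Finset.sum_congr rfl (fun k _ => hsum k), ← Matrix.mul_apply,
      hpinvp, Matrix.one_apply]
  have hq_mem : qU ∈ Qgroup' n r := by
    constructor
    · intro i j hij
      rw [hqval]
      by_cases hj : (j : ℕ) = r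
      · have hi : (i : ℕ) < r := by
          rcases hij with h | h
          · exact h
          · omega
        have hne : i ≠ j := fun h' => by subst h'; omega
        rw [if_neg hne]
        have hfr : FixR p' i := fun j' => hDp' i j' (Or.inl hi)
        have hfrinv : FixR pinv i := FixR.inv hppinv hfr
        rw [hfrinv.mul_apply k' j, hk'def, kmat_apply]
        have h1 : ¬(i = j ∧ (i : ℕ) < r) := by rintro ⟨h', -⟩; exact hne h'
        have h2 : ¬(r ≤ (i : ℕ) ∧ r ≤ (j : ℕ)) := by rintro ⟨h', -⟩; omega
        rw [if_neg h1, if_neg h2, add_zero]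
      · exact hcolfix j hj i
    · intro i j hj
      rw [hqval]
      exact hcolfix j (by omega) i
  refine ⟨ρU, hρ_mem, uU, hu_mem, pU, hp_mem, qU, hq_mem, vU, hv_mem, ?_⟩
  rw [hρUdef, hqUdef, hR0Udef]
  group

/-! ### Part (ii) : measure theory -/

abbrev Pn (n : ℕ) := Fin n → Fin n → ℝ

instance (n : ℕ) : SecondCountableTopology (Mn n) :=
  inferInstanceAs (SecondCountableTopology (Fin n → Fin n → ℝ))

instance (n : ℕ) : SecondCountableTopology ((Mn n)ᵐᵒᵖ) :=
  MulOpposite.opHomeomorph.symm.secondCountableTopology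

instance (n : ℕ) : SecondCountableTopology (GL (Fin n) ℝ) :=
  Units.isEmbedding_embedProduct.secondCountableTopology

instance (n : ℕ) : LocallyCompactSpace (Mn n) :=
  inferInstanceAs (LocallyCompactSpace (Fin n → Fin n → ℝ))

instance (n : ℕ) : LocallyCompactSpace ((Mn n)ᵐᵒᵖ) :=
  (Homeomorph.locallyCompactSpace_iff MulOpposite.opHomeomorph).mp inferInstance

instance (n : ℕ) : LocallyCompactSpace (GL (Fin n) ℝ) := by
  have hrange : Set.range (Units.embedProduct (Mn n)) =
      {p : Mn n × (Mn n)ᵐᵒᵖ | p.1 * p.2.unop = 1 ∧ p.2.unop * p.1 = 1} := by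
    ext p
    constructor
    · rintro ⟨u, rfl⟩
      exact ⟨u.mul_inv, u.inv_mul⟩
    · rintro ⟨h1, h2⟩
      refine ⟨⟨p.1, p.2.unop, h1, h2⟩, ?_⟩
      rw [Units.embedProduct_apply]
      exact Prod.ext rfl (MulOpposite.op_unop p.2)
  have hemb : Topology.IsClosedEmbedding (Units.embedProduct (Mn n)) := by
    refine ⟨Units.isEmbedding_embedProduct, ?_⟩
    rw [hrange]
    have hc : Continuous fun p : Mn n × (Mn n)ᵐᵒᵖ =>
        ((p.1 * p.2.unop, p.2.unop * p.1) : Mn n × Mn n) :=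
      (continuous_fst.matrix_mul (MulOpposite.continuous_unop.comp continuous_snd)).prodMk
        ((MulOpposite.continuous_unop.comp continuous_snd).matrix_mul continuous_fst)
    have hset : {p : Mn n × (Mn n)ᵐᵒᵖ | p.1 * p.2.unop = 1 ∧ p.2.unop * p.1 = 1}
        = (fun p : Mn n × (Mn n)ᵐᵒᵖ => ((p.1 * p.2.unop, p.2.unop * p.1) : Mn n × Mn n)) ⁻¹'
          {((1 : Mn n), (1 : Mn n))} := by
      ext p
      simp [Prod.ext_iff]
    rw [hset]
    exact isClosed_singleton.preimage hc
  exact hemb.locallyCompactSpace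

lemma eval_charpoly' {m : ℕ} (N : Matrix (Fin m) (Fin m) ℝ) (t : ℝ) :
    (Matrix.charpoly N).eval t = (Matrix.diagonal (fun _ => t) - N).det := by
  rw [Matrix.charpoly, ← Polynomial.coe_evalRingHom, RingHom.map_det]
  congr 1
  rw [RingHom.mapMatrix_apply]
  ext i j
  rcases eq_or_ne i j with rfl | hne
  · rw [Matrix.map_apply, Matrix.charmatrix_apply_eq]
    simp [Matrix.sub_apply, Matrix.diagonal_apply_eq]
  · rw [Matrix.map_apply, Matrix.charmatrix_apply_ne _ _ _ hne]
    simp [Matrix.sub_apply, Matrix.diagonal_apply_ne _ hne]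

lemma finite_roots {m : ℕ} (M : Matrix (Fin m) (Fin m) ℝ) :
    {t : ℝ | (M + Matrix.diagonal (fun _ => t)).det = 0}.Finite := by
  have h : ∀ t : ℝ, (M + Matrix.diagonal (fun _ => t)).det = (Matrix.charpoly (-M)).eval t := by
    intro t
    rw [eval_charpoly', sub_neg_eq_add, add_comm]
  refine (Polynomial.finite_setOf_isRoot ((Matrix.charpoly_monic (-M)).ne_zero)).subset ?_
  intro t ht
  simp only [Set.mem_setOf_eq] at ht ⊢
  rw [Polynomial.IsRoot, ← h]
  exact ht

lemma null_subdet (n s : ℕ) :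
    volume {B : Pn n | ((Matrix.of B).submatrix (emb n s) (emb n s)).det = 0} = 0 := by
  classical
  set F : Pn n → ℝ := fun B => ((Matrix.of B).submatrix (emb n s) (emb n s)).det with hF
  have hofc : Continuous fun B : Pn n => (Matrix.of B : Matrix (Fin n) (Fin n) ℝ) :=
    continuous_id
  have hFc : Continuous F := Continuous.matrix_det (hofc.matrix_submatrix _ _)
  set Z := {B : Pn n | F B = 0} with hZ
  set E : Pn n := fun i j => if (i : ℕ) = (j : ℕ) ∧ s ≤ (i : ℕ) then 1 else 0 with hE
  have hsub : ∀ (B : Pn n) (t : ℝ),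
      (Matrix.of (B + t • E)).submatrix (emb n s) (emb n s)
        = (Matrix.of B).submatrix (emb n s) (emb n s) + Matrix.diagonal (fun _ => t) := by
    intro B t
    ext i j
    rw [Matrix.add_apply, Matrix.submatrix_apply, Matrix.submatrix_apply]
    show (B + t • E) (emb n s i) (emb n s j)
      = B (emb n s i) (emb n s j) + Matrix.diagonal (fun _ => t) i j
    rw [Pi.add_apply, Pi.add_apply, Pi.smul_apply, Pi.smul_apply, smul_eq_mul]
    have hEval : E (emb n s i) (emb n s j) = if i = j then 1 else 0 := by
      rw [hE]
      have h1 : ((emb n s i : Fin n) : ℕ) = s + (i : ℕ) := rfl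
      have h2 : ((emb n s j : Fin n) : ℕ) = s + (j : ℕ) := rfl
      rcases eq_or_ne i j with rfl | hne
      · simp [h1, h2]
      · have : ¬(s + (i : ℕ) = s + (j : ℕ) ∧ s ≤ s + (i : ℕ)) := by
          rintro ⟨h', -⟩
          exact hne (Fin.ext (by omega))
        simp only [h1, h2, if_neg this, if_neg hne]
    rw [hEval]
    rcases eq_or_ne i j with rfl | hne
    · rw [Matrix.diagonal_apply_eq, if_pos rfl, mul_one]
    · rw [Matrix.diagonal_apply_ne _ hne, if_neg hne, mul_zero]
  set S : Set (Pn n × ℝ) := {p | F (p.1 + p.2 • E) = 0} with hS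
  have hScont : Continuous fun p : Pn n × ℝ => F (p.1 + p.2 • E) :=
    hFc.comp (continuous_fst.add (continuous_snd.smul continuous_const))
  have hSm : MeasurableSet S := (measurableSet_singleton (0 : ℝ)).preimage hScont.measurable
  have h1 : (volume.prod volume) S = 0 := by
    rw [Measure.prod_apply hSm]
    have hzero : ∀ B : Pn n, volume (Prod.mk B ⁻¹' S) = 0 := by
      intro B
      have hset : (Prod.mk B ⁻¹' S) = {t : ℝ |
          ((Matrix.of B).submatrix (emb n s) (emb n s) + Matrix.diagonal (fun _ => t)).det
            = 0} := by
        ext t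
        simp only [Set.mem_preimage, hS, Set.mem_setOf_eq, hF]
        rw [hsub B t]
      rw [hset]
      exact Set.Finite.measure_zero (finite_roots _) volume
    calc ∫⁻ B, volume (Prod.mk B ⁻¹' S) ∂volume = ∫⁻ _ : Pn n, 0 ∂volume :=
        lintegral_congr hzero
      _ = 0 := lintegral_zero
  have h2 : (volume.prod volume) S = volume Z * volume (Set.univ : Set ℝ) := by
    rw [Measure.prod_apply_symm hSm]
    have hslice : ∀ t : ℝ, volume ((fun B : Pn n => (B, t)) ⁻¹' S) = volume Z := by
      intro t
      have hpre : ((fun B : Pn n => (B, t)) ⁻¹' S) = (fun B : Pn n => B + t • E) ⁻¹' Z := rfl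
      have heq : (fun B : Pn n => B + t • E) = (fun B : Pn n => t • E + B) :=
        funext fun B => add_comm _ _
      rw [hpre, heq]
      exact measure_preimage_add volume (t • E) Z
    rw [lintegral_congr hslice, lintegral_const]
  rw [h1, Real.volume_univ] at h2
  rcases mul_eq_zero.mp h2.symm with h | h
  · exact h
  · exact absurd h (by simp)

lemma null_FF (n r : ℕ) :
    volume {B : Pn n | f1 n r (Matrix.of B) * f2 n r (Matrix.of B) = 0} = 0 := by
  have hset : {B : Pn n | f1 n r (Matrix.of B) * f2 n r (Matrix.of B) = 0}
      = {B : Pn n | ((Matrix.of B).submatrix (emb n r) (emb n r)).det = 0}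
        ∪ {B : Pn n | ((Matrix.of B).submatrix (emb n (r + 1)) (emb n (r + 1))).det = 0} := by
    ext B
    simp only [Set.mem_setOf_eq, Set.mem_union, mul_eq_zero]
    exact Iff.rfl
  rw [hset]
  exact measure_union_null (null_subdet n r) (null_subdet n (r + 1))

lemma null_FF_mul (n r : ℕ) (C Cinv : Mn n) (hCC : C * Cinv = 1) (hCinvC : Cinv * C = 1) :
    volume {B : Pn n | f1 n r (Matrix.of B * C) * f2 n r (Matrix.of B * C) = 0} = 0 := by
  classical
  set L : Pn n ≃ₗ[ℝ] Pn n :=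
    { toFun := fun B => Matrix.of.symm (Matrix.of B * C)
      invFun := fun B => Matrix.of.symm (Matrix.of B * Cinv)
      map_add' := fun x y => show (Matrix.of x + Matrix.of y) * C = _ from
        by rw [Matrix.add_mul]; rfl
      map_smul' := fun c x => show (c • Matrix.of x) * C = _ from
        by rw [Matrix.smul_mul]; rfl
      left_inv := fun x => show (Matrix.of x * C) * Cinv = x from
        by rw [mul_assoc, hCC, mul_one]; rfl
      right_inv := fun x => show (Matrix.of x * Cinv) * C = x from
        by rw [mul_assoc, hCinvC, mul_one]; rfl } with hL
  have hdet : LinearMap.det (L : Pn n →ₗ[ℝ] Pn n) ≠ 0 :=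
    (LinearEquiv.isUnit_det' L).ne_zero
  have hpre : {B : Pn n | f1 n r (Matrix.of B * C) * f2 n r (Matrix.of B * C) = 0}
      = (L : Pn n →ₗ[ℝ] Pn n) ⁻¹'
        {B : Pn n | f1 n r (Matrix.of B) * f2 n r (Matrix.of B) = 0} := rfl
  rw [hpre, Measure.addHaar_preimage_linearMap volume hdet, null_FF, mul_zero]

instance (n : ℕ) : BorelSpace (GL (Fin n) ℝ) := ⟨rfl⟩

theorem part_two (n r : ℕ) (hn : r < n) (μ : Measure (GL (Fin n) ℝ)) (hμ : μ.IsHaarMeasure) :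
    μ {g : GL (Fin n) ℝ | ∃ ρ ∈ RSgroup n r, ∃ u ∈ Ugroup n r, ∃ p ∈ Pgroup' n r,
        ∃ q ∈ Qgroup' n r, ∃ v ∈ Ubar n r, g = ρ * u * p * q * v}ᶜ = 0 := by
  classical
  haveI := hμ
  haveI : SigmaFinite μ := inferInstance
  set ZG : Set (GL (Fin n) ℝ) :=
    {h : GL (Fin n) ℝ | f1 n r (↑h) * f2 n r (↑h) = 0} with hZG
  have hsub : {g : GL (Fin n) ℝ | ∃ ρ ∈ RSgroup n r, ∃ u ∈ Ugroup n r, ∃ p ∈ Pgroup' n r,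
      ∃ q ∈ Qgroup' n r, ∃ v ∈ Ubar n r, g = ρ * u * p * q * v}ᶜ ⊆ ZG := by
    intro g hg
    by_contra hFF0
    have h12 := mul_ne_zero_iff.mp hFF0
    exact hg (decomp hn g h12.1 h12.2)
  refine measure_mono_null hsub ?_
  -- continuity of the minor functions
  have hofc : Continuous fun B : Pn n => (Matrix.of B : Mn n) := continuous_id
  have hFFm : Continuous fun M : Mn n => f1 n r M * f2 n r M := by
    have hidc : Continuous fun M : Mn n => M := continuous_id
    exact (Continuous.matrix_det (hidc.matrix_submatrix _ _)).mul
      (Continuous.matrix_det (hidc.matrix_submatrix _ _))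
  have hvalc : Continuous fun h : GL (Fin n) ℝ => (↑h : Mn n) := Units.continuous_val
  -- the compact positive-measure set of invertible matrices
  have hdetc : Continuous fun B : Pn n => (Matrix.of B).det := Continuous.matrix_det hofc
  have hO : IsOpen {B : Pn n | (Matrix.of B).det ≠ 0} := by
    have := (isClosed_singleton (x := (0 : ℝ))).preimage hdetc
    exact this.isOpen_compl
  have hc₀ : (Matrix.of.symm (1 : Mn n)) ∈ {B : Pn n | (Matrix.of B).det ≠ 0} := by
    simp only [Set.mem_setOf_eq, Equiv.apply_symm_apply, Matrix.det_one]
    exact one_ne_zero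
  obtain ⟨ε, hε, hball⟩ := Metric.isOpen_iff.mp hO _ hc₀
  set K := Metric.closedBall (Matrix.of.symm (1 : Mn n)) (ε / 2) with hK
  have hKs : K ⊆ {B : Pn n | (Matrix.of B).det ≠ 0} :=
    (Metric.closedBall_subset_ball (by linarith)).trans hball
  have hKm : MeasurableSet K := Metric.isClosed_closedBall.measurableSet
  have hKfin : volume K < ⊤ := measure_closedBall_lt_top
  have hKpos : 0 < volume K := Metric.measure_closedBall_pos volume _ (by linarith)
  set ν : Measure (Pn n) := volume.restrict K with hν
  haveI : IsFiniteMeasure ν := ⟨by rw [Measure.restrict_apply_univ]; exact hKfin⟩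
  set S : Set (Pn n × GL (Fin n) ℝ) :=
    {p | f1 n r (Matrix.of p.1 * ↑p.2) * f2 n r (Matrix.of p.1 * ↑p.2) = 0} with hS
  have hSc : Continuous fun p : Pn n × GL (Fin n) ℝ =>
      f1 n r (Matrix.of p.1 * ↑p.2) * f2 n r (Matrix.of p.1 * ↑p.2) :=
    hFFm.comp ((hofc.comp continuous_fst).matrix_mul (hvalc.comp continuous_snd))
  have hSm : MeasurableSet S := (measurableSet_singleton (0 : ℝ)).preimage hSc.measurable
  have hT1 : (ν.prod μ) S = μ ZG * volume K := by
    rw [Measure.prod_apply hSm, hν]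
    have hslice : ∀ B ∈ K, μ (Prod.mk B ⁻¹' S) = μ ZG := by
      intro B hB
      have hunit : IsUnit (Matrix.of B) :=
        (Matrix.isUnit_iff_isUnit_det _).mpr (isUnit_iff_ne_zero.mpr (hKs hB))
      obtain ⟨w, hw⟩ := hunit
      have hpre : Prod.mk B ⁻¹' S = (fun h => w * h) ⁻¹' ZG := by
        ext h
        simp only [Set.mem_preimage, hZG, Set.mem_setOf_eq, hS]
        rw [Units.val_mul, hw]
      rw [hpre, measure_preimage_mul]
    rw [setLIntegral_congr_fun hKm hslice, setLIntegral_const]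
  have hT2 : (ν.prod μ) S = 0 := by
    rw [Measure.prod_apply_symm hSm]
    have hz : ∀ h : GL (Fin n) ℝ, ν ((fun B : Pn n => (B, h)) ⁻¹' S) = 0 := by
      intro h
      have hzero : volume ((fun B : Pn n => (B, h)) ⁻¹' S) = 0 := by
        have : ((fun B : Pn n => (B, h)) ⁻¹' S)
            = {B : Pn n | f1 n r (Matrix.of B * ↑h) * f2 n r (Matrix.of B * ↑h) = 0} := rfl
        rw [this]
        refine null_FF_mul n r (↑h) (↑(h⁻¹)) ?_ ?_
        · rw [← Units.val_mul, mul_inv_cancel, Units.val_one]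
        · rw [← Units.val_mul, inv_mul_cancel, Units.val_one]
      have hle : ν ((fun B : Pn n => (B, h)) ⁻¹' S)
          ≤ volume ((fun B : Pn n => (B, h)) ⁻¹' S) := by
        rw [hν, Measure.restrict_apply' hKm]
        exact measure_mono Set.inter_subset_left
      exact le_antisymm (hzero ▸ hle) zero_le
    rw [lintegral_congr hz, lintegral_zero]
  have h0 : μ ZG * volume K = 0 := by rw [← hT1, hT2]
  rcases mul_eq_zero.mp h0 with h | h
  · exact h
  · exact absurd h (ne_of_gt hKpos)

end RSproof

/-- For `n > r ≥ 0`: (i) if `R_r u₁ p₁ q₁ v₁ = R_r u₂ p₂ q₂ v₂` with `uᵢ ∈ U_r`,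
`pᵢ ∈ P'_{n-r}`, `qᵢ ∈ Q'_{n-r}`, `vᵢ ∈ Ū_{r,n-r}`, then `u₁ = u₂`, `q₁ = q₂`, `v₁ = v₂`
and `p₂ p₁⁻¹ ∈ N'_{n-r}`; (ii) the complement of the product set
`R_r ⋅ U_r ⋅ P'_{n-r} ⋅ Q'_{n-r} ⋅ Ū_{r,n-r}` in `GL_n(ℝ)` is null for every Haar
measure on `GL_n(ℝ)`. -/
theorem RS_coset_decomposition (n r : ℕ) (hn : r < n) :
    (∀ u₁ u₂ p₁ p₂ q₁ q₂ v₁ v₂ : GL (Fin n) ℝ,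
      u₁ ∈ Ugroup n r → u₂ ∈ Ugroup n r → p₁ ∈ Pgroup' n r → p₂ ∈ Pgroup' n r →
      q₁ ∈ Qgroup' n r → q₂ ∈ Qgroup' n r → v₁ ∈ Ubar n r → v₂ ∈ Ubar n r →
      (u₁ * p₁ * q₁ * v₁) * (u₂ * p₂ * q₂ * v₂)⁻¹ ∈ RSgroup n r →
      u₁ = u₂ ∧ q₁ = q₂ ∧ v₁ = v₂ ∧ p₂ * p₁⁻¹ ∈ Ngroup' n r) ∧
    (∀ (μ : Measure (GL (Fin n) ℝ)), μ.IsHaarMeasure →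
      μ {g : GL (Fin n) ℝ | ∃ ρ ∈ RSgroup n r, ∃ u ∈ Ugroup n r, ∃ p ∈ Pgroup' n r,
        ∃ q ∈ Qgroup' n r, ∃ v ∈ Ubar n r, g = ρ * u * p * q * v}ᶜ = 0) := by
  constructor
  · intro u₁ u₂ p₁ p₂ q₁ q₂ v₁ v₂ hu₁ hu₂ hp₁ hp₂ hq₁ hq₂ hv₁ hv₂ hρ
    exact RSproof.part_one n r hn u₁ u₂ p₁ p₂ q₁ q₂ v₁ v₂ hu₁ hu₂ hp₁ hp₂ hq₁ hq₂ hv₁ hv₂ hρ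
  · intro μ hμ
    exact RSproof.part_two n r hn μ hμ
end

section
/- Fix integers n > r ≥ 0. The multiplication map (P_{r,n−r} ∩ P°_{r+1}) × U_r × Q'_{n−r} × Ū_{r,n−r} → GL_n(ℝ), (τ, u, q, ū) ↦ τ u q ū, is injective and its image is open in GL_n(ℝ); in particular it is an open embedding. -/
open Matrix

/-- `P_{r,n-r} ∩ P°_{r+1} ⊆ GL_n(ℝ)`: block upper-triangular matrices (for the blocks
`(r, n-r)`) whose column of index `r` equals the standard basis vector `e_{r+1}`. -/
def Tgroup (n r : ℕ) : Set (GL (Fin n) ℝ) :=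
  {g | (∀ i j : Fin n, r ≤ (i : ℕ) → (j : ℕ) < r →
          (g : Matrix (Fin n) (Fin n) ℝ) i j = 0) ∧
       (∀ i j : Fin n, (j : ℕ) = r →
          (g : Matrix (Fin n) (Fin n) ℝ) i j = if (i : ℕ) = r then 1 else 0)}

namespace MOE
variable {r m : ℕ}
abbrev κ (r m : ℕ) : Fin r ⊕ Fin (m+1) ≃ Fin (r + (m+1)) := finSumFinEquiv
def blk (g : Matrix (Fin (r+(m+1))) (Fin (r+(m+1))) ℝ) :
    Matrix (Fin r ⊕ Fin (m+1)) (Fin r ⊕ Fin (m+1)) ℝ := g.submatrix (κ r m) (κ r m)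

lemma vl (i : Fin r) : ((κ r m (Sum.inl i) : Fin (r+(m+1))) : ℕ) = i := by simp
lemma vr (j : Fin (m+1)) : ((κ r m (Sum.inr j) : Fin (r+(m+1))) : ℕ) = r + j := by simp
lemma ne_lr (i : Fin r) (j : Fin (m+1)) : κ r m (Sum.inl i) ≠ κ r m (Sum.inr j) := by
  intro e; exact absurd ((κ r m).injective e) (by simp)
lemma ne_ll {i j : Fin r} (h : i ≠ j) : κ r m (Sum.inl i) ≠ κ r m (Sum.inl j) := by
  intro e; exact h (Sum.inl.inj ((κ r m).injective e))
lemma ne_rr {i j : Fin (m+1)} (h : i ≠ j) : κ r m (Sum.inr i) ≠ κ r m (Sum.inr j) := by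
  intro e; exact h (Sum.inr.inj ((κ r m).injective e))
lemma eq_rr_iff (i j : Fin (m+1)) : κ r m (Sum.inr i) = κ r m (Sum.inr j) ↔ i = j := by
  constructor
  · intro e; exact Sum.inr.inj ((κ r m).injective e)
  · rintro rfl; rfl
lemma eq_ll_iff (i j : Fin r) : κ r m (Sum.inl i) = κ r m (Sum.inl j) ↔ i = j := by
  constructor
  · intro e; exact Sum.inl.inj ((κ r m).injective e)
  · rintro rfl; rfl

lemma T_blocks (g : Matrix (Fin (r+(m+1))) (Fin (r+(m+1))) ℝ)
    (h1 : ∀ i j : Fin (r+(m+1)), r ≤ (i:ℕ) → (j:ℕ) < r → g i j = 0)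
    (h2 : ∀ i j : Fin (r+(m+1)), (j:ℕ) = r → g i j = if (i:ℕ) = r then 1 else 0) :
    (blk g).toBlocks₂₁ = 0 ∧ (∀ i, (blk g).toBlocks₁₂ i 0 = 0) ∧
      (∀ i, (blk g).toBlocks₂₂ i 0 = if i = 0 then 1 else 0) := by
  refine ⟨?_, ?_, ?_⟩
  · ext i j
    simp only [toBlocks₂₁, of_apply, blk, submatrix_apply, Matrix.zero_apply]
    exact h1 _ _ (by rw [vr]; omega) (by rw [vl]; exact j.isLt)
  · intro i
    simp only [toBlocks₁₂, of_apply, blk, submatrix_apply]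
    rw [h2 _ _ (by rw [vr]; simp), if_neg (by rw [vl]; have := i.isLt; omega)]
  · intro i
    simp only [toBlocks₂₂, of_apply, blk, submatrix_apply]
    rw [h2 _ _ (by rw [vr]; simp), vr]
    by_cases hi : i = 0
    · subst hi; rw [if_pos (by simp), if_pos rfl]
    · rw [if_neg (by have : (i:ℕ) ≠ 0 := fun e => hi (Fin.ext e); omega), if_neg hi]

lemma U_blocks (g : Matrix (Fin (r+(m+1))) (Fin (r+(m+1))) ℝ)
    (h1 : ∀ i : Fin (r+(m+1)), g i i = 1)
    (h2 : ∀ i j : Fin (r+(m+1)), i ≠ j → ¬((i:ℕ) < r ∧ (j:ℕ) = r) → g i j = 0) :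
    (blk g).toBlocks₁₁ = 1 ∧ (blk g).toBlocks₂₁ = 0 ∧ (blk g).toBlocks₂₂ = 1 ∧
      (∀ i j, j ≠ 0 → (blk g).toBlocks₁₂ i j = 0) := by
  refine ⟨?_, ?_, ?_, ?_⟩
  · ext i j
    simp only [toBlocks₁₁, of_apply, blk, submatrix_apply, Matrix.one_apply]
    by_cases hij : i = j
    · subst hij; rw [if_pos rfl]; exact h1 _
    · rw [if_neg hij]
      exact h2 _ _ (ne_ll hij) (by rw [vl, vl]; have := j.isLt; omega)
  · ext i j
    simp only [toBlocks₂₁, of_apply, blk, submatrix_apply, Matrix.zero_apply]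
    exact h2 _ _ (Ne.symm (ne_lr j i)) (by rw [vr, vl]; have := j.isLt; omega)
  · ext i j
    simp only [toBlocks₂₂, of_apply, blk, submatrix_apply, Matrix.one_apply]
    by_cases hij : i = j
    · subst hij; rw [if_pos rfl]; exact h1 _
    · rw [if_neg hij]
      exact h2 _ _ (ne_rr hij) (by rw [vr, vr]; omega)
  · intro i j hj
    simp only [toBlocks₁₂, of_apply, blk, submatrix_apply]
    refine h2 _ _ (ne_lr i j) ?_
    rw [vl, vr]
    have : (j:ℕ) ≠ 0 := fun e => hj (Fin.ext e)
    omega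

lemma Q_blocks (g : Matrix (Fin (r+(m+1))) (Fin (r+(m+1))) ℝ)
    (h1 : ∀ i j : Fin (r+(m+1)), ((i:ℕ) < r ∨ (j:ℕ) < r) → g i j = if i = j then 1 else 0)
    (h2 : ∀ i j : Fin (r+(m+1)), r + 1 ≤ (j:ℕ) → g i j = if i = j then 1 else 0) :
    (blk g).toBlocks₁₁ = 1 ∧ (blk g).toBlocks₁₂ = 0 ∧ (blk g).toBlocks₂₁ = 0 ∧
      (∀ i j, j ≠ 0 → (blk g).toBlocks₂₂ i j = if i = j then 1 else 0) := by
  refine ⟨?_, ?_, ?_, ?_⟩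
  · ext i j
    simp only [toBlocks₁₁, of_apply, blk, submatrix_apply, Matrix.one_apply]
    rw [h1 _ _ (Or.inl (by rw [vl]; exact i.isLt))]
    by_cases hij : i = j
    · subst hij; simp
    · rw [if_neg (ne_ll hij), if_neg hij]
  · ext i j
    simp only [toBlocks₁₂, of_apply, blk, submatrix_apply, Matrix.zero_apply]
    rw [h1 _ _ (Or.inl (by rw [vl]; exact i.isLt)), if_neg (ne_lr i j)]
  · ext i j
    simp only [toBlocks₂₁, of_apply, blk, submatrix_apply, Matrix.zero_apply]
    rw [h1 _ _ (Or.inr (by rw [vl]; exact j.isLt)), if_neg (Ne.symm (ne_lr j i))]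
  · intro i j hj
    simp only [toBlocks₂₂, of_apply, blk, submatrix_apply]
    have hjv : (j:ℕ) ≠ 0 := fun e => hj (Fin.ext e)
    rw [h2 _ _ (by rw [vr]; omega)]
    by_cases hij : i = j
    · subst hij; simp
    · rw [if_neg (ne_rr hij), if_neg hij]

lemma V_blocks (g : Matrix (Fin (r+(m+1))) (Fin (r+(m+1))) ℝ)
    (h1 : ∀ i : Fin (r+(m+1)), g i i = 1)
    (h2 : ∀ i j : Fin (r+(m+1)), i ≠ j → ¬(r ≤ (i:ℕ) ∧ (j:ℕ) < r) → g i j = 0) :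
    (blk g).toBlocks₁₁ = 1 ∧ (blk g).toBlocks₁₂ = 0 ∧ (blk g).toBlocks₂₂ = 1 := by
  refine ⟨?_, ?_, ?_⟩
  · ext i j
    simp only [toBlocks₁₁, of_apply, blk, submatrix_apply, Matrix.one_apply]
    by_cases hij : i = j
    · subst hij; rw [if_pos rfl]; exact h1 _
    · rw [if_neg hij]
      exact h2 _ _ (ne_ll hij) (by rw [vl]; have := i.isLt; omega)
  · ext i j
    simp only [toBlocks₁₂, of_apply, blk, submatrix_apply, Matrix.zero_apply]
    exact h2 _ _ (ne_lr i j) (by rw [vl]; have := i.isLt; omega)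
  · ext i j
    simp only [toBlocks₂₂, of_apply, blk, submatrix_apply, Matrix.one_apply]
    by_cases hij : i = j
    · subst hij; rw [if_pos rfl]; exact h1 _
    · rw [if_neg hij]
      exact h2 _ _ (ne_rr hij) (by rw [vr, vr]; omega)

def unblk (M : Matrix (Fin r ⊕ Fin (m+1)) (Fin r ⊕ Fin (m+1)) ℝ) :
    Matrix (Fin (r+(m+1))) (Fin (r+(m+1))) ℝ := M.submatrix (κ r m).symm (κ r m).symm

lemma unblk_apply (M : Matrix (Fin r ⊕ Fin (m+1)) (Fin r ⊕ Fin (m+1)) ℝ) (a b) :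
    unblk M (κ r m a) (κ r m b) = M a b := by
  simp [unblk, submatrix_apply]

lemma blk_unblk (M : Matrix (Fin r ⊕ Fin (m+1)) (Fin r ⊕ Fin (m+1)) ℝ) :
    blk (unblk M) = M := by
  ext a b
  simp [blk, unblk, submatrix_apply]

lemma blk_mul (g h : Matrix (Fin (r+(m+1))) (Fin (r+(m+1))) ℝ) :
    blk (g * h) = blk g * blk h := (submatrix_mul_equiv g h _ _ _).symm

lemma blk_inj {g h : Matrix (Fin (r+(m+1))) (Fin (r+(m+1))) ℝ} (e : blk g = blk h) :
    g = h := by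
  have h2 := congrArg (fun M => M.submatrix (κ r m).symm (κ r m).symm) e
  simp [blk, submatrix_submatrix, Function.comp_def] at h2
  exact h2

lemma blk_det (g : Matrix (Fin (r+(m+1))) (Fin (r+(m+1))) ℝ) :
    (blk g).det = g.det := det_submatrix_equiv_self _ _

lemma unblk_det (M : Matrix (Fin r ⊕ Fin (m+1)) (Fin r ⊕ Fin (m+1)) ℝ) :
    (unblk M).det = M.det := det_submatrix_equiv_self _ _

lemma rep (i : Fin (r+(m+1))) :
    (∃ a : Fin r, i = κ r m (Sum.inl a)) ∨ (∃ b : Fin (m+1), i = κ r m (Sum.inr b)) := by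
  rcases h : (κ r m).symm i with a | b
  · exact Or.inl ⟨a, by rw [← h, Equiv.apply_symm_apply]⟩
  · exact Or.inr ⟨b, by rw [← h, Equiv.apply_symm_apply]⟩

lemma fin_eq_zero_of {c : Fin (m+1)} (h : r + (c:ℕ) = r) : c = 0 := by
  have h0 : ((0:Fin (m+1)):ℕ) = 0 := rfl
  exact Fin.ext (by omega)

-- the product of the four block matrices
lemma prod_blocks (T : Matrix (Fin r) (Fin r) ℝ) (R u' : Matrix (Fin r) (Fin (m+1)) ℝ)
    (S Qb : Matrix (Fin (m+1)) (Fin (m+1)) ℝ) (x : Matrix (Fin (m+1)) (Fin r) ℝ) :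
    fromBlocks T R 0 S * fromBlocks 1 u' 0 1 * fromBlocks 1 0 0 Qb * fromBlocks 1 0 x 1 =
      fromBlocks (T + (T*u'+R)*Qb*x) ((T*u'+R)*Qb) (S*Qb*x) (S*Qb) := by
  simp [fromBlocks_multiply, Matrix.mul_assoc, Matrix.add_mul]

-- multiplying on the right by a matrix whose cols ≠ 0 are standard
lemma mulq_apply {Sm Qb : Matrix (Fin (m+1)) (Fin (m+1)) ℝ}
    (hq : ∀ i j, j ≠ 0 → Qb i j = if i = j then 1 else 0) (i j : Fin (m+1)) (hj : j ≠ 0) :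
    (Sm * Qb) i j = Sm i j := by
  rw [mul_apply]
  rw [Finset.sum_eq_single j]
  · rw [hq _ _ hj, if_pos rfl, mul_one]
  · intro k _ hk
    rw [hq _ _ hj, if_neg hk, mul_zero]
  · intro h; exact absurd (Finset.mem_univ j) h

lemma det_colzero {S : Matrix (Fin (m+1)) (Fin (m+1)) ℝ}
    (hS : ∀ i, S i 0 = if i = 0 then 1 else 0) :
    S.det = (S.submatrix Fin.succ Fin.succ).det := by
  rw [det_succ_column_zero]
  rw [Finset.sum_eq_single 0]
  · rw [hS, if_pos rfl, Fin.succAbove_zero]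
    simp
  · intro k _ hk
    rw [hS, if_neg hk, mul_zero, zero_mul]
  · intro h; exact absurd (Finset.mem_univ _) h

lemma cancel_left {k l : ℕ} {A : Matrix (Fin k) (Fin k) ℝ} {X Y : Matrix (Fin k) (Fin l) ℝ} (hA : IsUnit A.det)
    (h : A * X = A * Y) : X = Y := by
  have h2 := congrArg (fun M => A⁻¹ * M) h
  simpa [← Matrix.mul_assoc, Matrix.nonsing_inv_mul _ hA] using h2

lemma cancel_right {k l : ℕ} {A : Matrix (Fin k) (Fin k) ℝ} {X Y : Matrix (Fin l) (Fin k) ℝ}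
    (hA : IsUnit A.det) (h : X * A = Y * A) : X = Y := by
  have h2 := congrArg (fun M => M * A⁻¹) h
  simpa [Matrix.mul_assoc, Matrix.mul_nonsing_inv _ hA] using h2


lemma mem_T_of (T : Matrix (Fin r) (Fin r) ℝ) (R : Matrix (Fin r) (Fin (m+1)) ℝ)
    (S : Matrix (Fin (m+1)) (Fin (m+1)) ℝ)
    (hR : ∀ i, R i 0 = 0) (hS : ∀ i, S i 0 = if i = 0 then 1 else 0) :
    (∀ i j : Fin (r+(m+1)), r ≤ (i:ℕ) → (j:ℕ) < r →
        unblk (fromBlocks T R 0 S) i j = 0) ∧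
    (∀ i j : Fin (r+(m+1)), (j:ℕ) = r →
        unblk (fromBlocks T R 0 S) i j = if (i:ℕ) = r then 1 else 0) := by
  constructor
  · intro i j hi hj
    rcases rep i with ⟨a, rfl⟩ | ⟨b, rfl⟩
    · rw [vl] at hi; exact absurd hi (by have := a.isLt; omega)
    rcases rep j with ⟨c, rfl⟩ | ⟨c, rfl⟩
    · rw [unblk_apply]; rfl
    · rw [vr] at hj; exact absurd hj (by omega)
  · intro i j hj
    rcases rep j with ⟨c, rfl⟩ | ⟨c, rfl⟩
    · rw [vl] at hj; exact absurd hj (by have := c.isLt; omega)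
    rw [vr] at hj
    have hc : c = 0 := fin_eq_zero_of hj
    subst hc
    rcases rep i with ⟨a, rfl⟩ | ⟨b, rfl⟩
    · rw [unblk_apply, vl, if_neg (by have := a.isLt; omega)]
      exact hR a
    · rw [unblk_apply, vr]
      rw [show (fromBlocks T R 0 S (Sum.inr b) (Sum.inr 0) : ℝ) = S b 0 from rfl, hS]
      by_cases hb : b = 0
      · subst hb; rw [if_pos rfl, if_pos (by simp)]
      · rw [if_neg hb, if_neg (fun h => hb (fin_eq_zero_of h))]

lemma mem_U_of (u' : Matrix (Fin r) (Fin (m+1)) ℝ) (hu : ∀ i j, j ≠ 0 → u' i j = 0) :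
    (∀ i : Fin (r+(m+1)), unblk (fromBlocks 1 u' 0 1) i i = 1) ∧
    (∀ i j : Fin (r+(m+1)), i ≠ j → ¬((i:ℕ) < r ∧ (j:ℕ) = r) →
        unblk (fromBlocks 1 u' 0 1) i j = 0) := by
  constructor
  · intro i
    rcases rep i with ⟨a, rfl⟩ | ⟨b, rfl⟩ <;> rw [unblk_apply] <;> simp
  · intro i j hij hcond
    rcases rep i with ⟨a, rfl⟩ | ⟨b, rfl⟩ <;> rcases rep j with ⟨c, rfl⟩ | ⟨c, rfl⟩ <;>
      rw [unblk_apply]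
    · have hac : a ≠ c := fun h => hij (by rw [h])
      show (1 : Matrix (Fin r) (Fin r) ℝ) a c = 0
      rw [Matrix.one_apply, if_neg hac]
    · show u' a c = 0
      refine hu a c (fun hc => hcond ?_)
      subst hc
      exact ⟨by rw [vl]; exact a.isLt, by rw [vr]; simp⟩
    · rfl
    · have hbc : b ≠ c := fun h => hij (by rw [h])
      show (1 : Matrix (Fin (m+1)) (Fin (m+1)) ℝ) b c = 0
      rw [Matrix.one_apply, if_neg hbc]

lemma mem_Q_of (Qb : Matrix (Fin (m+1)) (Fin (m+1)) ℝ)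
    (hq : ∀ i j, j ≠ 0 → Qb i j = if i = j then 1 else 0) :
    (∀ i j : Fin (r+(m+1)), ((i:ℕ) < r ∨ (j:ℕ) < r) →
        unblk (fromBlocks 1 0 0 Qb) i j = if i = j then 1 else 0) ∧
    (∀ i j : Fin (r+(m+1)), r + 1 ≤ (j:ℕ) →
        unblk (fromBlocks 1 0 0 Qb) i j = if i = j then 1 else 0) := by
  constructor
  · intro i j hij
    rcases rep i with ⟨a, rfl⟩ | ⟨b, rfl⟩ <;> rcases rep j with ⟨c, rfl⟩ | ⟨c, rfl⟩ <;>
      rw [unblk_apply]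
    · show (1 : Matrix (Fin r) (Fin r) ℝ) a c = _
      rw [Matrix.one_apply]
      by_cases hac : a = c
      · subst hac; rw [if_pos rfl, if_pos rfl]
      · rw [if_neg hac, if_neg (ne_ll hac)]
    · show (0:ℝ) = _
      rw [if_neg (ne_lr a c)]
    · show (0:ℝ) = _
      rw [if_neg (Ne.symm (ne_lr c b))]
    · exfalso
      rcases hij with h | h
      · rw [vr] at h; omega
      · rw [vr] at h; omega
  · intro i j hj
    rcases rep j with ⟨c, rfl⟩ | ⟨c, rfl⟩
    · rw [vl] at hj; exact absurd hj (by have := c.isLt; omega)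
    rw [vr] at hj
    have hc : c ≠ 0 := by
      intro h; subst h
      have h0 : ((0:Fin (m+1)):ℕ) = 0 := rfl
      omega
    rcases rep i with ⟨a, rfl⟩ | ⟨b, rfl⟩ <;> rw [unblk_apply]
    · show (0:ℝ) = _
      rw [if_neg (ne_lr a c)]
    · show Qb b c = _
      rw [hq b c hc]
      by_cases hbc : b = c
      · subst hbc; rw [if_pos rfl, if_pos rfl]
      · rw [if_neg hbc, if_neg (ne_rr hbc)]

lemma mem_V_of (x : Matrix (Fin (m+1)) (Fin r) ℝ) :
    (∀ i : Fin (r+(m+1)), unblk (fromBlocks 1 0 x 1) i i = 1) ∧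
    (∀ i j : Fin (r+(m+1)), i ≠ j → ¬(r ≤ (i:ℕ) ∧ (j:ℕ) < r) →
        unblk (fromBlocks 1 0 x 1) i j = 0) := by
  constructor
  · intro i
    rcases rep i with ⟨a, rfl⟩ | ⟨b, rfl⟩ <;> rw [unblk_apply] <;> simp
  · intro i j hij hcond
    rcases rep i with ⟨a, rfl⟩ | ⟨b, rfl⟩ <;> rcases rep j with ⟨c, rfl⟩ | ⟨c, rfl⟩ <;>
      rw [unblk_apply]
    · have hac : a ≠ c := fun h => hij (by rw [h])
      show (1 : Matrix (Fin r) (Fin r) ℝ) a c = 0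
      rw [Matrix.one_apply, if_neg hac]
    · rfl
    · exact absurd ⟨by rw [vr]; omega, by rw [vl]; exact c.isLt⟩ hcond
    · have hbc : b ≠ c := fun h => hij (by rw [h])
      show (1 : Matrix (Fin (m+1)) (Fin (m+1)) ℝ) b c = 0
      rw [Matrix.one_apply, if_neg hbc]

/-- the underlying matrix of a `GL` element -/
def glm (g : GL (Fin (r+(m+1))) ℝ) : Matrix (Fin (r+(m+1))) (Fin (r+(m+1))) ℝ := ↑g

-- decomposition of a group element's blocks from memberships
lemma T_decomp (τ : GL (Fin (r+(m+1))) ℝ) (hτ : τ ∈ Tgroup (r+(m+1)) r) :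
    blk (glm τ) =
      fromBlocks (blk (glm τ)).toBlocks₁₁ (blk (glm τ)).toBlocks₁₂ 0
        (blk (glm τ)).toBlocks₂₂ ∧
    (∀ i, (blk (glm τ)).toBlocks₁₂ i 0 = 0) ∧
    (∀ i, (blk (glm τ)).toBlocks₂₂ i 0 = if i = 0 then 1 else 0) ∧
    IsUnit (blk (glm τ)).toBlocks₁₁.det ∧
    IsUnit (blk (glm τ)).toBlocks₂₂.det := by
  obtain ⟨h21, h12, h22⟩ := T_blocks (glm τ) hτ.1 hτ.2
  have e : blk (glm τ) =
      fromBlocks (blk (glm τ)).toBlocks₁₁ (blk (glm τ)).toBlocks₁₂ 0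
        (blk (glm τ)).toBlocks₂₂ := by
    rw [← h21, fromBlocks_toBlocks]
  have hu : IsUnit (blk (glm τ)).det := by
    rw [blk_det]; exact (isUnit_iff_isUnit_det _).mp τ.isUnit
  rw [e, det_fromBlocks_zero₂₁, IsUnit.mul_iff] at hu
  exact ⟨e, h12, h22, hu.1, hu.2⟩

lemma U_decomp (u : GL (Fin (r+(m+1))) ℝ) (hu : u ∈ Ugroup (r+(m+1)) r) :
    blk (glm u) =
      fromBlocks 1 (blk (glm u)).toBlocks₁₂ 0 1 ∧
    (∀ i j, j ≠ 0 → (blk (glm u)).toBlocks₁₂ i j = 0) := by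
  obtain ⟨h11, h21, h22, h12⟩ := U_blocks (glm u) hu.1 hu.2
  refine ⟨?_, h12⟩
  rw [← h11, ← h21, ← h22, fromBlocks_toBlocks]

lemma Q_decomp (q : GL (Fin (r+(m+1))) ℝ) (hq : q ∈ Qgroup' (r+(m+1)) r) :
    blk (glm q) =
      fromBlocks 1 0 0 (blk (glm q)).toBlocks₂₂ ∧
    (∀ i j, j ≠ 0 → (blk (glm q)).toBlocks₂₂ i j = if i = j then 1 else 0) ∧
    IsUnit (blk (glm q)).toBlocks₂₂.det := by
  obtain ⟨h11, h12, h21, h22⟩ := Q_blocks (glm q) hq.1 hq.2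
  have e : blk (glm q) =
      fromBlocks 1 0 0 (blk (glm q)).toBlocks₂₂ := by
    rw [← h11, ← h12, ← h21, fromBlocks_toBlocks]
  have hu : IsUnit (blk (glm q)).det := by
    rw [blk_det]; exact (isUnit_iff_isUnit_det _).mp q.isUnit
  rw [e, det_fromBlocks_zero₂₁, det_one, one_mul] at hu
  exact ⟨e, h22, hu⟩

lemma V_decomp (v : GL (Fin (r+(m+1))) ℝ) (hv : v ∈ Ubar (r+(m+1)) r) :
    blk (glm v) =
      fromBlocks 1 0 (blk (glm v)).toBlocks₂₁ 1 := by
  obtain ⟨h11, h12, h22⟩ := V_blocks (glm v) hv.1 hv.2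
  rw [← h11, ← h12, ← h22, fromBlocks_toBlocks]

-- block form of a product τ*u*q*v of group elements
lemma blk_prod (τ u q v : GL (Fin (r+(m+1))) ℝ)
    (hτ : τ ∈ Tgroup (r+(m+1)) r) (hu : u ∈ Ugroup (r+(m+1)) r)
    (hq : q ∈ Qgroup' (r+(m+1)) r) (hv : v ∈ Ubar (r+(m+1)) r) :
    blk (glm (τ * u * q * v)) =
      fromBlocks
        ((blk (glm τ)).toBlocks₁₁ +
          ((blk (glm τ)).toBlocks₁₁ * (blk (glm u)).toBlocks₁₂ +
            (blk (glm τ)).toBlocks₁₂) * (blk (glm q)).toBlocks₂₂ *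
            (blk (glm v)).toBlocks₂₁)
        (((blk (glm τ)).toBlocks₁₁ * (blk (glm u)).toBlocks₁₂ +
            (blk (glm τ)).toBlocks₁₂) * (blk (glm q)).toBlocks₂₂)
        ((blk (glm τ)).toBlocks₂₂ * (blk (glm q)).toBlocks₂₂ *
            (blk (glm v)).toBlocks₂₁)
        ((blk (glm τ)).toBlocks₂₂ * (blk (glm q)).toBlocks₂₂) := by
  have : glm (τ * u * q * v) = glm τ * glm u * glm q * glm v := by
    simp [glm]
  rw [this, blk_mul, blk_mul, blk_mul, (T_decomp τ hτ).1, (U_decomp u hu).1,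
    (Q_decomp q hq).1, V_decomp v hv, prod_blocks]
  simp only [toBlocks_fromBlocks₁₁, toBlocks_fromBlocks₁₂, toBlocks_fromBlocks₂₁,
    toBlocks_fromBlocks₂₂]

lemma injectivity (τ₁ τ₂ u₁ u₂ q₁ q₂ v₁ v₂ : GL (Fin (r+(m+1))) ℝ)
    (hτ₁ : τ₁ ∈ Tgroup (r+(m+1)) r) (hτ₂ : τ₂ ∈ Tgroup (r+(m+1)) r)
    (hu₁ : u₁ ∈ Ugroup (r+(m+1)) r) (hu₂ : u₂ ∈ Ugroup (r+(m+1)) r)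
    (hq₁ : q₁ ∈ Qgroup' (r+(m+1)) r) (hq₂ : q₂ ∈ Qgroup' (r+(m+1)) r)
    (hv₁ : v₁ ∈ Ubar (r+(m+1)) r) (hv₂ : v₂ ∈ Ubar (r+(m+1)) r)
    (heq : τ₁ * u₁ * q₁ * v₁ = τ₂ * u₂ * q₂ * v₂) :
    τ₁ = τ₂ ∧ u₁ = u₂ ∧ q₁ = q₂ ∧ v₁ = v₂ := by
  obtain ⟨eτ₁, h12₁, h22₁, hT₁d, hS₁d⟩ := T_decomp τ₁ hτ₁
  obtain ⟨eτ₂, h12₂, h22₂, hT₂d, hS₂d⟩ := T_decomp τ₂ hτ₂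
  obtain ⟨eu₁, hu'₁⟩ := U_decomp u₁ hu₁
  obtain ⟨eu₂, hu'₂⟩ := U_decomp u₂ hu₂
  obtain ⟨eq₁, hqc₁, hQ₁d⟩ := Q_decomp q₁ hq₁
  obtain ⟨eq₂, hqc₂, hQ₂d⟩ := Q_decomp q₂ hq₂
  have ev₁ := V_decomp v₁ hv₁
  have ev₂ := V_decomp v₂ hv₂
  have E := congrArg (fun z : GL (Fin (r+(m+1))) ℝ => blk (glm z)) heq
  rw [blk_prod τ₁ u₁ q₁ v₁ hτ₁ hu₁ hq₁ hv₁, blk_prod τ₂ u₂ q₂ v₂ hτ₂ hu₂ hq₂ hv₂] at E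
  have E11 := congrArg Matrix.toBlocks₁₁ E
  have E12 := congrArg Matrix.toBlocks₁₂ E
  have E21 := congrArg Matrix.toBlocks₂₁ E
  have E22 := congrArg Matrix.toBlocks₂₂ E
  simp only [toBlocks_fromBlocks₁₁, toBlocks_fromBlocks₁₂, toBlocks_fromBlocks₂₁,
    toBlocks_fromBlocks₂₂] at E11 E12 E21 E22
  set T₁ := (blk (glm τ₁)).toBlocks₁₁ with hdT₁
  set R₁ := (blk (glm τ₁)).toBlocks₁₂ with hdR₁
  set S₁ := (blk (glm τ₁)).toBlocks₂₂ with hdS₁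
  set T₂ := (blk (glm τ₂)).toBlocks₁₁ with hdT₂
  set R₂ := (blk (glm τ₂)).toBlocks₁₂ with hdR₂
  set S₂ := (blk (glm τ₂)).toBlocks₂₂ with hdS₂
  set w₁ := (blk (glm u₁)).toBlocks₁₂ with hdw₁
  set w₂ := (blk (glm u₂)).toBlocks₁₂ with hdw₂
  set Qb₁ := (blk (glm q₁)).toBlocks₂₂ with hdQb₁
  set Qb₂ := (blk (glm q₂)).toBlocks₂₂ with hdQb₂
  set x₁ := (blk (glm v₁)).toBlocks₂₁ with hdx₁
  set x₂ := (blk (glm v₂)).toBlocks₂₁ with hdx₂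
  -- step 1 : S₁ = S₂
  have hS : S₁ = S₂ := by
    funext i j
    by_cases hj : j = 0
    · subst hj; rw [h22₁ i, h22₂ i]
    · rw [← mulq_apply (Sm := S₁) hqc₁ i j hj, ← mulq_apply (Sm := S₂) hqc₂ i j hj, E22]
  -- step 2 : Qb₁ = Qb₂
  rw [hS] at E22
  have hQb : Qb₁ = Qb₂ := cancel_left hS₂d E22
  -- step 3 : x₁ = x₂
  rw [hS, hQb] at E21
  have hDd : IsUnit (S₂ * Qb₂).det := by rw [det_mul]; exact hS₂d.mul hQ₂d
  have hx : x₁ = x₂ := cancel_left hDd E21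
  -- step 4 : W
  rw [hQb] at E12
  have W : T₁ * w₁ + R₁ = T₂ * w₂ + R₂ := cancel_right hQ₂d E12
  -- step 5 : T₁ = T₂
  rw [W, hQb, hx] at E11
  have hT : T₁ = T₂ := by
    have := add_right_cancel E11
    exact this
  -- step 6 : R₁ = R₂
  have hR : R₁ = R₂ := by
    funext i j
    by_cases hj : j = 0
    · subst hj; rw [h12₁ i, h12₂ i]
    · have z₁ : (T₁ * w₁) i j = 0 := by
        rw [mul_apply]; exact Finset.sum_eq_zero (fun k _ => by rw [hu'₁ k j hj, mul_zero])
      have z₂ : (T₂ * w₂) i j = 0 := by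
        rw [mul_apply]; exact Finset.sum_eq_zero (fun k _ => by rw [hu'₂ k j hj, mul_zero])
      have := congrFun (congrFun W i) j
      simp only [Matrix.add_apply, z₁, z₂, zero_add] at this
      exact this
  -- step 7 : w₁ = w₂
  have hw : w₁ = w₂ := by
    rw [hT, hR] at W
    exact cancel_left hT₂d (add_right_cancel W)
  refine ⟨?_, ?_, ?_, ?_⟩
  · exact Units.ext (blk_inj (g := glm τ₁) (h := glm τ₂) (by rw [eτ₁, eτ₂, hT, hR, hS]))
  · exact Units.ext (blk_inj (g := glm u₁) (h := glm u₂) (by rw [eu₁, eu₂, hw]))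
  · exact Units.ext (blk_inj (g := glm q₁) (h := glm q₂) (by rw [eq₁, eq₂, hQb]))
  · exact Units.ext (blk_inj (g := glm v₁) (h := glm v₂) (by rw [ev₁, ev₂, hx]))

lemma image_cond (τ u q v : GL (Fin (r+(m+1))) ℝ)
    (hτ : τ ∈ Tgroup (r+(m+1)) r) (hu : u ∈ Ugroup (r+(m+1)) r)
    (hq : q ∈ Qgroup' (r+(m+1)) r) (hv : v ∈ Ubar (r+(m+1)) r) :
    ((blk (glm (τ * u * q * v))).toBlocks₂₂.submatrix Fin.succ Fin.succ).det ≠ 0 ∧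
      ((blk (glm (τ * u * q * v))).toBlocks₂₂).det ≠ 0 := by
  obtain ⟨eτ, h12, h22, hTd, hSd⟩ := T_decomp τ hτ
  obtain ⟨eq', hqc, hQd⟩ := Q_decomp q hq
  have e22 : (blk (glm (τ * u * q * v))).toBlocks₂₂ =
      (blk (glm τ)).toBlocks₂₂ * (blk (glm q)).toBlocks₂₂ := by
    rw [blk_prod τ u q v hτ hu hq hv, toBlocks_fromBlocks₂₂]
  constructor
  · have hsub : ((blk (glm τ)).toBlocks₂₂ * (blk (glm q)).toBlocks₂₂).submatrix
        Fin.succ Fin.succ = (blk (glm τ)).toBlocks₂₂.submatrix Fin.succ Fin.succ := by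
      funext i j
      exact mulq_apply hqc _ _ (Fin.succ_ne_zero j)
    rw [e22, hsub, ← det_colzero h22]
    exact hSd.ne_zero
  · rw [e22, det_mul]
    exact (hSd.mul hQd).ne_zero

lemma exists_decomp (g : GL (Fin (r+(m+1))) ℝ)
    (hT3 : ((blk (glm g)).toBlocks₂₂.submatrix Fin.succ Fin.succ).det ≠ 0)
    (hD : ((blk (glm g)).toBlocks₂₂).det ≠ 0) :
    ∃ τ ∈ Tgroup (r+(m+1)) r, ∃ u ∈ Ugroup (r+(m+1)) r, ∃ q ∈ Qgroup' (r+(m+1)) r,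
      ∃ v ∈ Ubar (r+(m+1)) r, g = τ * u * q * v := by
  set Ab := (blk (glm g)).toBlocks₁₁ with hdA
  set Bb := (blk (glm g)).toBlocks₁₂ with hdB
  set Cb := (blk (glm g)).toBlocks₂₁ with hdC
  set Db := (blk (glm g)).toBlocks₂₂ with hdD
  set S : Matrix (Fin (m+1)) (Fin (m+1)) ℝ :=
    Matrix.of (fun i j => if j = 0 then (if i = 0 then (1:ℝ) else 0) else Db i j) with hdS
  have hScol : ∀ i, S i 0 = if i = 0 then 1 else 0 := fun i => by simp [hdS]
  have hSsub : S.submatrix Fin.succ Fin.succ = Db.submatrix Fin.succ Fin.succ := by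
    funext i j
    simp [hdS, submatrix_apply, Fin.succ_ne_zero]
  have hSdet : IsUnit S.det := by
    rw [det_colzero hScol, hSsub]
    exact isUnit_iff_ne_zero.mpr hT3
  set Qb := S⁻¹ * Db with hdQb
  have hSQ : S * Qb = Db := by
    rw [hdQb, ← Matrix.mul_assoc, Matrix.mul_nonsing_inv _ hSdet, Matrix.one_mul]
  have hq : ∀ i j, j ≠ 0 → Qb i j = if i = j then 1 else 0 := by
    intro i j hj
    have e1 : Qb i j = (S⁻¹ * S) i j := by
      rw [hdQb, mul_apply, mul_apply]
      refine Finset.sum_congr rfl (fun k _ => ?_)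
      rw [show Db k j = S k j from by simp [hdS, if_neg hj]]
    rw [e1, Matrix.nonsing_inv_mul _ hSdet, Matrix.one_apply]
  have hQdet : IsUnit Qb.det := by
    have h1 : S.det * Qb.det = Db.det := by rw [← det_mul, hSQ]
    refine isUnit_iff_ne_zero.mpr (fun h0 => hD ?_)
    rw [← h1, h0, mul_zero]
  have hDdet : IsUnit Db.det := isUnit_iff_ne_zero.mpr hD
  set x := Db⁻¹ * Cb with hdx
  have hDx : Db * x = Cb := by
    rw [hdx, ← Matrix.mul_assoc, Matrix.mul_nonsing_inv _ hDdet, Matrix.one_mul]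
  set T := Ab - Bb * x with hdT
  have hgdet : IsUnit (blk (glm g)).det := by
    rw [blk_det]
    exact (isUnit_iff_isUnit_det _).mp g.isUnit
  have hfb : blk (glm g) = fromBlocks Ab Bb Cb Db := (fromBlocks_toBlocks _).symm
  have hTdet : IsUnit T.det := by
    haveI := Db.invertibleOfIsUnitDet hDdet
    have e2 : (blk (glm g)).det = Db.det * T.det := by
      rw [hfb, det_fromBlocks₂₂, Matrix.invOf_eq_nonsing_inv, Matrix.mul_assoc, ← hdx, ← hdT]
    rw [e2] at hgdet
    exact (IsUnit.mul_iff.mp hgdet).2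
  set P := Bb * Qb⁻¹ with hdP
  have hPQ : P * Qb = Bb := by
    rw [hdP, Matrix.mul_assoc, Matrix.nonsing_inv_mul _ hQdet, Matrix.mul_one]
  set w : Matrix (Fin r) (Fin (m+1)) ℝ :=
    Matrix.of (fun i j => if j = 0 then (T⁻¹ * P) i 0 else 0) with hdw
  have hwcol : ∀ i j, j ≠ 0 → w i j = 0 := fun i j hj => by simp [hdw, if_neg hj]
  set R : Matrix (Fin r) (Fin (m+1)) ℝ :=
    Matrix.of (fun i j => if j = 0 then (0:ℝ) else P i j) with hdR
  have hRcol : ∀ i, R i 0 = 0 := fun i => by simp [hdR]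
  have hTw : T * w + R = P := by
    funext i j
    by_cases hj : j = 0
    · subst hj
      have e1 : (T * w) i 0 = (T * (T⁻¹ * P)) i 0 := by
        rw [mul_apply, mul_apply]
        exact Finset.sum_congr rfl
          (fun k _ => by rw [show w k 0 = (T⁻¹ * P) k 0 from by simp [hdw]])
      rw [Matrix.add_apply, e1, ← Matrix.mul_assoc, Matrix.mul_nonsing_inv _ hTdet,
        Matrix.one_mul, show R i 0 = 0 from hRcol i, add_zero]
    · have e1 : (T * w) i j = 0 := by
        rw [mul_apply]
        exact Finset.sum_eq_zero (fun k _ => by rw [hwcol k j hj, mul_zero])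
      rw [Matrix.add_apply, e1, zero_add, show R i j = P i j from by simp [hdR, if_neg hj]]
  -- assemble the GL elements
  have hτu : IsUnit (unblk (fromBlocks T R 0 S)) := by
    rw [isUnit_iff_isUnit_det, unblk_det, det_fromBlocks_zero₂₁]
    exact hTdet.mul hSdet
  have huu : IsUnit (unblk (fromBlocks (1 : Matrix (Fin r) (Fin r) ℝ) w 0 1)) := by
    rw [isUnit_iff_isUnit_det, unblk_det, det_fromBlocks_zero₂₁, det_one, det_one, mul_one]
    exact isUnit_one
  have hqu : IsUnit (unblk (fromBlocks (1 : Matrix (Fin r) (Fin r) ℝ) 0 0 Qb)) := by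
    rw [isUnit_iff_isUnit_det, unblk_det, det_fromBlocks_zero₂₁, det_one, one_mul]
    exact hQdet
  have hvu : IsUnit (unblk (fromBlocks (1 : Matrix (Fin r) (Fin r) ℝ) 0 x 1)) := by
    rw [isUnit_iff_isUnit_det, unblk_det, det_fromBlocks_zero₁₂, det_one, det_one, mul_one]
    exact isUnit_one
  refine ⟨hτu.unit, ?_, huu.unit, ?_, hqu.unit, ?_, hvu.unit, ?_, ?_⟩
  · constructor
    · intro i j hi hj
      simp only [IsUnit.unit_spec]
      exact (mem_T_of T R S hRcol hScol).1 i j hi hj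
    · intro i j hj
      simp only [IsUnit.unit_spec]
      exact (mem_T_of T R S hRcol hScol).2 i j hj
  · constructor
    · intro i
      simp only [IsUnit.unit_spec]
      exact (mem_U_of w hwcol).1 i
    · intro i j hij hc
      simp only [IsUnit.unit_spec]
      exact (mem_U_of w hwcol).2 i j hij hc
  · constructor
    · intro i j hij
      simp only [IsUnit.unit_spec]
      exact (mem_Q_of Qb hq).1 i j hij
    · intro i j hj
      simp only [IsUnit.unit_spec]
      exact (mem_Q_of Qb hq).2 i j hj
  · constructor
    · intro i
      simp only [IsUnit.unit_spec]
      exact (mem_V_of x).1 i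
    · intro i j hij hc
      simp only [IsUnit.unit_spec]
      exact (mem_V_of x).2 i j hij hc
  · -- the product equality
    have hval : glm (hτu.unit * huu.unit * hqu.unit * hvu.unit) =
        unblk (fromBlocks T R 0 S) * unblk (fromBlocks 1 w 0 1) *
          unblk (fromBlocks 1 0 0 Qb) * unblk (fromBlocks 1 0 x 1) := by
      simp [glm, hτu.unit_spec, huu.unit_spec, hqu.unit_spec, hvu.unit_spec]
    have hblk : blk (glm (hτu.unit * huu.unit * hqu.unit * hvu.unit)) = blk (glm g) := by
      rw [hval, blk_mul, blk_mul, blk_mul, blk_unblk, blk_unblk, blk_unblk, blk_unblk,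
        prod_blocks, hTw, hPQ, hSQ, hDx]
      rw [show T + Bb * x = Ab from by rw [hdT]; exact sub_add_cancel _ _]
      rw [hfb]
    exact Units.ext (blk_inj (g := glm g)
      (h := glm (hτu.unit * huu.unit * hqu.unit * hvu.unit)) hblk.symm)

lemma continuous_D : Continuous fun g : GL (Fin (r+(m+1))) ℝ =>
    (blk (glm g)).toBlocks₂₂ := by
  have e : (fun g : GL (Fin (r+(m+1))) ℝ => (blk (glm g)).toBlocks₂₂) =
      fun g : GL (Fin (r+(m+1))) ℝ => (glm g).submatrix
        (fun i : Fin (m+1) => κ r m (Sum.inr i)) (fun j : Fin (m+1) => κ r m (Sum.inr j)) := rfl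
  rw [e]
  exact Continuous.matrix_submatrix Units.continuous_val _ _

end MOE


open MOE in
/-- For `n > r ≥ 0`, the multiplication map
`(P_{r,n-r} ∩ P°_{r+1}) × U_r × Q'_{n-r} × Ū_{r,n-r} → GL_n(ℝ)` is injective and its image
is open; in particular it is an open embedding. -/
theorem multiplication_open_embedding (n r : ℕ) (hn : r < n) :
    (∀ τ₁ τ₂ u₁ u₂ q₁ q₂ v₁ v₂ : GL (Fin n) ℝ,
      τ₁ ∈ Tgroup n r → τ₂ ∈ Tgroup n r → u₁ ∈ Ugroup n r → u₂ ∈ Ugroup n r →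
      q₁ ∈ Qgroup' n r → q₂ ∈ Qgroup' n r → v₁ ∈ Ubar n r → v₂ ∈ Ubar n r →
      τ₁ * u₁ * q₁ * v₁ = τ₂ * u₂ * q₂ * v₂ →
      τ₁ = τ₂ ∧ u₁ = u₂ ∧ q₁ = q₂ ∧ v₁ = v₂) ∧
    IsOpen {g : GL (Fin n) ℝ | ∃ τ ∈ Tgroup n r, ∃ u ∈ Ugroup n r, ∃ q ∈ Qgroup' n r,
      ∃ v ∈ Ubar n r, g = τ * u * q * v} := by
  obtain ⟨m, rfl⟩ : ∃ m, n = r + (m+1) := ⟨n - r - 1, by omega⟩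
  constructor
  · exact injectivity
  · have hset : {g : GL (Fin (r+(m+1))) ℝ | ∃ τ ∈ Tgroup (r+(m+1)) r,
        ∃ u ∈ Ugroup (r+(m+1)) r, ∃ q ∈ Qgroup' (r+(m+1)) r,
        ∃ v ∈ Ubar (r+(m+1)) r, g = τ * u * q * v} =
        {g : GL (Fin (r+(m+1))) ℝ |
          ((blk (glm g)).toBlocks₂₂.submatrix Fin.succ Fin.succ).det ≠ 0 ∧
          ((blk (glm g)).toBlocks₂₂).det ≠ 0} := by
      ext g
      constructor
      · rintro ⟨τ, hτ, u, hu, q, hq, v, hv, rfl⟩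
        exact image_cond τ u q v hτ hu hq hv
      · rintro ⟨h1, h2⟩
        exact exists_decomp g h1 h2
    rw [hset]
    have h1 : Continuous fun g : GL (Fin (r+(m+1))) ℝ =>
        ((blk (glm g)).toBlocks₂₂.submatrix Fin.succ Fin.succ).det :=
      (continuous_D.matrix_submatrix _ _).matrix_det
    have h2 : Continuous fun g : GL (Fin (r+(m+1))) ℝ =>
        ((blk (glm g)).toBlocks₂₂).det := continuous_D.matrix_det
    have e2 : {g : GL (Fin (r+(m+1))) ℝ |
          ((blk (glm g)).toBlocks₂₂.submatrix Fin.succ Fin.succ).det ≠ 0 ∧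
          ((blk (glm g)).toBlocks₂₂).det ≠ 0} =
        ((fun g : GL (Fin (r+(m+1))) ℝ =>
            ((blk (glm g)).toBlocks₂₂.submatrix Fin.succ Fin.succ).det) ⁻¹' {(0:ℝ)}ᶜ) ∩
        ((fun g : GL (Fin (r+(m+1))) ℝ =>
            ((blk (glm g)).toBlocks₂₂).det) ⁻¹' {(0:ℝ)}ᶜ) := by
      ext g; simp [Set.mem_setOf_eq, Set.mem_inter_iff]
    rw [e2]
    exact (isOpen_compl_singleton.preimage h1).inter (isOpen_compl_singleton.preimage h2)
end
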